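/- arXiv:2212.06753 — 5 statements merged into one kernel-verified Lean document; each statement's English description precedes it below -/
import Mathlib

section
/- Let p_1, …, p_n be n distinct prime numbers and let G be a solvable transitive subgroup of Sym(X), where |X| = p_1⋯p_n. Let {1} = K_0 ⊆ T_1 ⊆ K_1 ⊆ … ⊆ T_n ⊆ K_n = G be normal subgroups of G satisfying, for every i = 1, …, n: p_i divides |K_i/K_{i−1}|, T_i/K_{i−1} is the Sylow p_i-subgroup of K_i/K_{i−1}, and K_i = {g ∈ G : g(T_i(x)) = T_i(x) for all x ∈ X}. Let P_i be a Sylow p_i-subgroup of G. Then for all x ∈ X and all i ≥ 1: K_i(x) = K_i(T_i(x)) = T_i(x), and T_i = (T_i ∩ P_i)K_{i−1} (as a set product of subgroups). -/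
open Equiv Pointwise

universe u v

/-- An involutive non-degenerate set-theoretic solution of the Yang–Baxter equation on `X`,
presented by its family of bijections `σ x` (`x ∈ X`), subject to the condition
`σ_x ∘ σ_{σ_x⁻¹(y)} = σ_y ∘ σ_{σ_y⁻¹(x)}`; the solution itself is recovered as
`r (x, y) = (σ x y, (σ (σ x y))⁻¹ x)`. -/
structure YBE (X : Type u) where
  σ : X → Equiv.Perm X
  ybe : ∀ x y : X, σ x * σ ((σ x)⁻¹ y) = σ y * σ ((σ y)⁻¹ x)

namespace YBE

variable {X : Type u} {Y : Type v}

/-- The permutation group `𝒢(X,r)` of a solution. -/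
def permGroup (S : YBE X) : Subgroup (Equiv.Perm X) :=
  Subgroup.closure (Set.range S.σ)

/-- `(X,r)` is indecomposable if `𝒢(X,r)` acts transitively on `X`. -/
def Indecomposable (S : YBE X) : Prop :=
  ∀ x y : X, ∃ g ∈ S.permGroup, g x = y

/-- Homomorphism of solutions. -/
def IsHom (S : YBE X) (T : YBE Y) (f : X → Y) : Prop :=
  ∀ x y : X, f (S.σ x y) = T.σ (f x) (f y)

/-- `T` is (a copy of) the retract `Ret(X,r)` of `S`: there is a surjective homomorphism
of solutions identifying points with equal `σ`'s, and only those. -/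
def IsRetract (S : YBE X) (T : YBE Y) : Prop :=
  ∃ f : X → Y, Function.Surjective f ∧ S.IsHom T f ∧
    ∀ x x' : X, f x = f x' ↔ S.σ x = S.σ x'

/-- `Retⁿ(X,r)` has cardinality one, i.e. the multipermutation level is at most `n`. -/
def MPLevelLE : ℕ → (X : Type u) → YBE X → Prop
  | 0, X, _ => Nonempty X ∧ Subsingleton X
  | n + 1, _, S => ∃ (Z : Type u) (T : YBE Z), S.IsRetract T ∧ MPLevelLE n Z T

/-- `(X,r)` is a multipermutation solution: `Retⁿ(X,r)` has cardinality one
for some positive integer `n`. -/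
def IsMultipermutation (S : YBE X) : Prop :=
  ∃ n : ℕ, 0 < n ∧ MPLevelLE n X S

/-- `m` is the multipermutation level of `(X,r)`: it is the least positive integer
with `|Retᵐ(X,r)| = 1`. -/
def MPLevelExact (S : YBE X) (m : ℕ) : Prop :=
  0 < m ∧ MPLevelLE m X S ∧ ∀ k : ℕ, 0 < k → MPLevelLE k X S → m ≤ k

/-- A simple solution: `|X| > 1` and every epimorphic image is either an isomorphic copy
or a singleton. -/
def IsSimple (S : YBE X) : Prop :=
  1 < Nat.card X ∧ ∀ (Z : Type u) (T : YBE Z) (f : X → Z),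
    S.IsHom T f → Function.Surjective f → (Function.Bijective f ∨ Nat.card Z = 1)

end YBE

/-- The orbit `H(x) = {t(x) : t ∈ H}` of `x ∈ X` under a subgroup `H` of a permutation
group `G ≤ Sym(X)`. -/
def orbIn {X : Type u} {G : Subgroup (Equiv.Perm X)} (H : Subgroup ↥G) (x : X) : Set X :=
  {y | ∃ t : ↥G, t ∈ H ∧ (t : Equiv.Perm X) x = y}

/-- The "orbit" `A(x) = {t(x) : t ∈ A}` of `x ∈ X` under a subset `A` of a permutation
group `G ≤ Sym(X)`. -/
def orbSet {X : Type u} {G : Subgroup (Equiv.Perm X)} (A : Set ↥G) (x : X) : Set X :=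
  {y | ∃ t ∈ A, ((t : Equiv.Perm X)) x = y}

/-- A left-brace structure on a group `G`: an abelian group operation `add` (whose neutral
element is `1`) satisfying the brace compatibility `a∘(b+c) + a = a∘b + a∘c`, where `∘` is the
given group operation of `G`.  In other words, this makes `G` a left brace whose
multiplicative group is `G`. -/
structure BraceOps (G : Type*) [Group G] where
  add : G → G → G
  neg : G → G
  add_assoc : ∀ a b c, add (add a b) c = add a (add b c)
  add_comm : ∀ a b, add a b = add b a
  zero_add : ∀ a, add 1 a = a
  neg_add_cancel : ∀ a, add (neg a) a = 1
  compat : ∀ a b c, add (a * add b c) a = add (a * b) (a * c)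

namespace BraceOps

variable {G : Type*} [Group G]

/-- The lambda map `λ_a(b) = -a + a∘b` of a left brace. -/
def lam (β : BraceOps G) (a b : G) : G :=
  β.add (β.neg a) (a * b)

/-- Natural multiples with respect to the additive structure of the brace. -/
def nsmul (β : BraceOps G) : ℕ → G → G
  | 0, _ => 1
  | n + 1, a => β.add a (β.nsmul n a)

/-- The socle `Soc(B) = {a : a∘b = a + b for all b}` of a left brace. -/
def socle (β : BraceOps G) : Set G :=
  {a | ∀ b : G, a * b = β.add a b}

/-- The Sylow `q`-subgroup (i.e. the `q`-primary component) of the additive group of a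
finite left brace. -/
def addSylow (β : BraceOps G) (q : ℕ) : Set G :=
  {a | ∃ k : ℕ, β.nsmul (q ^ k) a = 1}

/-- `A` is a subgroup of the additive group of the brace. -/
def IsAddSubgroup (β : BraceOps G) (A : Set G) : Prop :=
  1 ∈ A ∧ (∀ a ∈ A, ∀ b ∈ A, β.add a b ∈ A) ∧ ∀ a ∈ A, β.neg a ∈ A

/-- A left ideal of a left brace: an additive subgroup stable under all `λ_a`. -/
def IsLeftIdeal (β : BraceOps G) (L : Set G) : Prop :=
  β.IsAddSubgroup L ∧ ∀ a : G, ∀ b ∈ L, β.lam a b ∈ L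

/-- An ideal of a left brace: a normal subgroup of the multiplicative group stable
under all `λ_a`. -/
def IsIdeal (β : BraceOps G) (I : Set G) : Prop :=
  1 ∈ I ∧ (∀ a ∈ I, ∀ b ∈ I, a * b ∈ I) ∧ (∀ a ∈ I, a⁻¹ ∈ I) ∧
    (∀ g : G, ∀ a ∈ I, g * a * g⁻¹ ∈ I) ∧ ∀ g : G, ∀ a ∈ I, β.lam g a ∈ I

end BraceOps

namespace YBE

variable {X : Type u}

/-- `σ x` as an element of `𝒢(X,r)`. -/
def σg (S : YBE X) (x : X) : ↥S.permGroup :=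
  ⟨S.σ x, Subgroup.subset_closure (Set.mem_range_self x)⟩

/-- The natural left-brace structure on `𝒢(X,r)`: the unique left brace structure whose
multiplicative group is `𝒢(X,r)`, whose additive group is generated by `{σ_x : x ∈ X}`,
and whose lambda map satisfies `λ_g(σ_y) = σ_{g(y)}`. -/
structure IsNaturalBrace (S : YBE X) (β : BraceOps ↥S.permGroup) : Prop where
  lam_sigma : ∀ (g : ↥S.permGroup) (y : X),
    β.lam g (S.σg y) = S.σg ((g : Equiv.Perm X) y)
  add_gen : ∀ A : Set ↥S.permGroup, β.IsAddSubgroup A → (∀ x : X, S.σg x ∈ A) →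
    ∀ g : ↥S.permGroup, g ∈ A

/-- The product `P_{τ(1)} P_{τ(2)} ⋯ P_{τ(i)}` of Sylow subgroups of the additive group of
the left brace `𝒢(X,r)`, taken inside the multiplicative group. -/
def sylProdTake (S : YBE X) (β : BraceOps ↥S.permGroup) {n : ℕ} (p : Fin n → ℕ)
    (τ : Equiv.Perm (Fin n)) (i : ℕ) : Set ↥S.permGroup :=
  ((List.ofFn fun j : Fin n => β.addSylow (p (τ j))).take i).prod

/-- The product `P_{i+1} P_{i+2} ⋯ P_n` of Sylow subgroups of the additive group of the
left brace `𝒢(X,r)`, taken inside the multiplicative group. -/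
def sylProdDrop (S : YBE X) (β : BraceOps ↥S.permGroup) {n : ℕ} (p : Fin n → ℕ)
    (i : ℕ) : Set ↥S.permGroup :=
  ((List.ofFn fun j : Fin n => β.addSylow (p j)).drop i).prod

end YBE

/-- The holomorph `ℤ/(q) ⋊ Aut(ℤ/(q))` of the cyclic group of order `q`. -/
abbrev Hol (q : ℕ) :=
  SemidirectProduct (Multiplicative (ZMod q)) (MulAut (Multiplicative (ZMod q)))
    (MonoidHom.id (MulAut (Multiplicative (ZMod q))))

/-- Kronecker delta `δ_{u,w} ∈ ℤ/(q)`. -/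
noncomputable def kdelta (q : ℕ) {α : Type v} (u w : α) : ZMod q :=
  letI := Classical.propDecidable (u = w)
  if u = w then 1 else 0

/-- The map `σ'_{(a,x)}(b,y) = (b + δ_{x,σ_x(y)}, σ_x(y))` on `ℤ/(q) × Y`. -/
noncomputable def extMap {Y : Type v} (T : YBE Y) (q : ℕ) (a b : ZMod q × Y) :
    ZMod q × Y :=
  (b.1 + kdelta q a.2 (T.σ a.2 b.2), T.σ a.2 b.2)

private lemma card_mul_relindex_aux {G : Type*} [Group G] [Finite G] {H K : Subgroup G}
    (hle : H ≤ K) : Nat.card ↥H * H.relIndex K = Nat.card ↥K := by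
  have h := Subgroup.card_mul_index (H.subgroupOf K)
  rwa [Nat.card_congr (Subgroup.subgroupOfEquivOfLe hle).toEquiv] at h

private lemma relindex_dvd_index_of_normal_right {G : Type*} [Group G] [Finite G]
    (Pi Ti : Subgroup G) [Ti.Normal] : Pi.relIndex Ti ∣ Pi.index := by
  have e1 := card_mul_relindex_aux (le_sup_left : Pi ≤ Pi ⊔ Ti)
  have e2 := card_mul_relindex_aux (le_sup_right : Ti ≤ Pi ⊔ Ti)
  have e3 : Ti.relIndex (Pi ⊔ Ti) = Ti.relIndex Pi := Subgroup.relIndex_sup_right Pi Ti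
  have e4 : Nat.card ↥(Ti ⊓ Pi) * Ti.relIndex Pi = Nat.card ↥Pi := by
    rw [← Subgroup.inf_relIndex_right]
    exact card_mul_relindex_aux inf_le_right
  have e5 : Nat.card ↥(Pi ⊓ Ti) * Pi.relIndex Ti = Nat.card ↥Ti := by
    rw [← Subgroup.inf_relIndex_right]
    exact card_mul_relindex_aux inf_le_right
  have hcc : Nat.card ↥(Ti ⊓ Pi) = Nat.card ↥(Pi ⊓ Ti) := by rw [inf_comm]
  have key : Pi.relIndex (Pi ⊔ Ti) = Pi.relIndex Ti := by
    have h6 : Nat.card ↥Pi * Pi.relIndex (Pi ⊔ Ti) = Nat.card ↥Pi * Pi.relIndex Ti := by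
      calc Nat.card ↥Pi * Pi.relIndex (Pi ⊔ Ti)
          = Nat.card ↥Ti * Ti.relIndex Pi := by rw [e1, ← e3, e2]
        _ = Nat.card ↥(Pi ⊓ Ti) * Pi.relIndex Ti * Ti.relIndex Pi := by rw [e5]
        _ = (Nat.card ↥(Ti ⊓ Pi) * Ti.relIndex Pi) * Pi.relIndex Ti := by rw [hcc]; ring
        _ = Nat.card ↥Pi * Pi.relIndex Ti := by rw [e4]
    exact Nat.eq_of_mul_eq_mul_left Nat.card_pos h6
  rw [← key]
  exact Subgroup.relIndex_dvd_index_of_le le_sup_left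

/-- For a chain of normal subgroups as in the structure theorem for solvable
transitive groups of square-free degree: `K_i(x) = K_i(T_i(x)) = T_i(x)` and
`T_i = (T_i ∩ P_i)K_{i-1}` for any Sylow `p_i`-subgroup `P_i` of `G`. -/
theorem statement7 {n : ℕ} {X : Type u} (p : Fin n → ℕ)
    (hp : ∀ i, Nat.Prime (p i)) (hinj : Function.Injective p)
    (G : Subgroup (Equiv.Perm X)) (hsolv : IsSolvable ↥G)
    (htrans : ∀ x y : X, ∃ g ∈ G, g x = y)
    (hcard : Nat.card X = Finset.univ.prod p)
    (K : Fin (n + 1) → Subgroup ↥G) (T : Fin n → Subgroup ↥G)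
    (hK0 : K 0 = ⊥) (hKn : K (Fin.last n) = ⊤)
    (hKnorm : ∀ i, (K i).Normal) (hTnorm : ∀ i, (T i).Normal)
    (hchain : ∀ i : Fin n, K i.castSucc ≤ T i ∧ T i ≤ K i.succ)
    (hdvd : ∀ i : Fin n, p i ∣ (K i.castSucc).relIndex (K i.succ))
    (hTsyl : ∀ i : Fin n, (∃ k : ℕ, (K i.castSucc).relIndex (T i) = p i ^ k) ∧
      ¬ p i ∣ (T i).relIndex (K i.succ))
    (hKdef : ∀ i : Fin n, ∀ g : ↥G, g ∈ K i.succ ↔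
      ∀ x : X, ⇑(g : Equiv.Perm X) '' orbIn (T i) x = orbIn (T i) x)
    (P : (i : Fin n) → Sylow (p i) ↥G) :
    ∀ (i : Fin n) (x : X),
      orbIn (K i.succ) x =
        {y : X | ∃ t : ↥G, t ∈ K i.succ ∧ ∃ z ∈ orbIn (T i) x, (t : Equiv.Perm X) z = y} ∧
      orbIn (K i.succ) x = orbIn (T i) x ∧
      (T i : Set ↥G) =
        ((T i : Set ↥G) ∩ ((P i : Subgroup ↥G) : Set ↥G)) * (K i.castSucc : Set ↥G) := by
  intro i x
  have hfinX : Finite X := by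
    have hpos : 0 < Nat.card X := by
      rw [hcard]; exact Finset.prod_pos fun j _ => (hp j).pos
    exact (Nat.card_pos_iff.mp hpos).2
  have hfinG : Finite ↥G := Subtype.finite
  haveI : Fact (p i).Prime := ⟨hp i⟩
  have hxT : x ∈ orbIn (T i) x := ⟨1, one_mem _, rfl⟩
  have hTK : T i ≤ K i.succ := (hchain i).2
  refine ⟨?_, ?_, ?_⟩
  · ext y
    constructor
    · rintro ⟨t, ht, rfl⟩
      exact ⟨t, ht, x, hxT, rfl⟩
    · rintro ⟨t, ht, z, ⟨s, hs, rfl⟩, rfl⟩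
      exact ⟨t * s, mul_mem ht (hTK hs), rfl⟩
  · apply Set.Subset.antisymm
    · rintro y ⟨t, ht, rfl⟩
      rw [← (hKdef i t).1 ht x]
      exact ⟨x, hxT, rfl⟩
    · rintro y ⟨s, hs, rfl⟩
      exact ⟨s, hTK hs, rfl⟩
  · set Ti := T i with hTi
    set Pi := (P i : Subgroup ↥G) with hPi
    set Km := K i.castSucc with hKmdef
    haveI : Ti.Normal := hTnorm i
    haveI : Km.Normal := hKnorm i.castSucc
    have hKT : Km ≤ Ti := (hchain i).1
    set H := (Ti ⊓ Pi) ⊔ Km with hH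
    have hle : H ≤ Ti := sup_le inf_le_left hKT
    obtain ⟨k, hk⟩ := (hTsyl i).1
    have h1 : Km.relIndex H * H.relIndex Ti = Km.relIndex Ti :=
      Subgroup.relIndex_mul_relIndex _ _ _ le_sup_right hle
    have hd1 : H.relIndex Ti ∣ p i ^ k := hk ▸ Dvd.intro_left _ h1
    have h2 : (Ti ⊓ Pi).relIndex H * H.relIndex Ti = (Ti ⊓ Pi).relIndex Ti :=
      Subgroup.relIndex_mul_relIndex _ _ _ le_sup_left hle
    have hd2 : H.relIndex Ti ∣ Pi.relIndex Ti := by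
      have hir : (Ti ⊓ Pi).relIndex Ti = Pi.relIndex Ti := Subgroup.inf_relIndex_left Ti Pi
      exact hir ▸ Dvd.intro_left _ h2
    have hdidx : Pi.relIndex Ti ∣ Pi.index := relindex_dvd_index_of_normal_right Pi Ti
    haveI : Finite (Sylow (p i) ↥G) :=
      Finite.of_injective (fun Q : Sylow (p i) ↥G => ((Q : Subgroup ↥G) : Set ↥G))
        (fun a b h => Sylow.ext (SetLike.coe_injective h))
    haveI : Pi.FiniteIndex := ⟨Subgroup.index_ne_zero_of_finite⟩
    have hnd : ¬ p i ∣ Pi.index := (P i).not_dvd_index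
    have hone : H.relIndex Ti = 1 := by
      obtain ⟨m, hm, he⟩ := (Nat.dvd_prime_pow (hp i)).mp hd1
      rcases Nat.eq_zero_or_pos m with h0 | h0
      · simpa [h0] using he
      · have hpd : p i ∣ H.relIndex Ti := by
          rw [he]; exact dvd_pow_self _ h0.ne'
        exact absurd ((hpd.trans hd2).trans hdidx) hnd
    have hHT : H = Ti := le_antisymm hle (Subgroup.relIndex_eq_one.mp hone)
    rw [← Subgroup.coe_inf, ← Subgroup.mul_normal, ← hH, hHT]
end

section
/- Let p_1, …, p_n be distinct prime numbers and let (X, r) be an indecomposable multipermutation involutive non-degenerate set-theoretic solution of the Yang–Baxter equation of cardinality p_1⋯p_n. Consider the natural left brace structure on 𝒢(X,r) and let P_i be the Sylow p_i-subgroup of its additive group, for i = 1, …, n. Then: every prime dividing |𝒢(X,r)| belongs to {p_1, …, p_n}; 𝒢(X,r) = P_1P_2⋯P_n (product taken in the multiplicative group); and each P_i is an elementary abelian p_i-group on which the two operations of the brace coincide (so P_i is a trivial brace and a Sylow p_i-subgroup of the multiplicative group 𝒢(X,r)). -/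
open Equiv Pointwise

universe u v

/-! ### Auxiliary lemmas: the additive group of a left brace -/

namespace BraceOps

variable {G : Type*} [Group G] (β : BraceOps G)

/-- Type synonym carrying the additive group structure of the brace. -/
def Ad (_β : BraceOps G) : Type _ := G

/-- The identity map `G → β.Ad`. -/
def toA (a : G) : β.Ad := a

/-- The identity map `β.Ad → G`. -/
def ofA (a : β.Ad) : G := a

instance : AddCommGroup β.Ad where
  add := β.add
  zero := β.toA 1
  neg := β.neg
  add_assoc := β.add_assoc
  add_comm := β.add_comm
  zero_add := β.zero_add
  add_zero := fun a => (β.add_comm a 1).trans (β.zero_add a)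
  neg_add_cancel := β.neg_add_cancel
  nsmul := fun n a => β.nsmul n a
  nsmul_zero := fun _ => rfl
  nsmul_succ := fun n a => β.add_comm a (β.nsmul n a)
  zsmul := fun z a => match z with
    | Int.ofNat n => β.nsmul n a
    | Int.negSucc n => β.neg (β.nsmul (n+1) a)
  zsmul_zero' := fun _ => rfl
  zsmul_succ' := fun n a => β.add_comm a (β.nsmul n a)
  zsmul_neg' := fun _ _ => rfl

@[simp] lemma toA_ofA (a : β.Ad) : β.toA (β.ofA a) = a := rfl
@[simp] lemma ofA_toA (a : G) : β.ofA (β.toA a) = a := rfl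
lemma toA_injective : Function.Injective β.toA := fun _ _ h => h
lemma add_def (a b : G) : β.add a b = β.ofA (β.toA a + β.toA b) := rfl
lemma toA_add (a b : G) : β.toA (β.add a b) = β.toA a + β.toA b := rfl
lemma neg_def (a : G) : β.neg a = β.ofA (-(β.toA a)) := rfl
lemma toA_neg (a : G) : β.toA (β.neg a) = -(β.toA a) := rfl
@[simp] lemma toA_one : β.toA 1 = 0 := rfl
lemma nsmul_def (n : ℕ) (a : G) : β.nsmul n a = β.ofA (n • β.toA a) := rfl
lemma toA_nsmul (n : ℕ) (a : G) : β.toA (β.nsmul n a) = n • β.toA a := rfl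

lemma toA_lam (a b : G) : β.toA (β.lam a b) = -(β.toA a) + β.toA (a * b) := rfl

/-- `a ∘ b = a + λ_a b`. -/
lemma toA_mul (a b : G) : β.toA (a * b) = β.toA a + β.toA (β.lam a b) := by
  rw [toA_lam]; abel

/-- The additive form of the brace compatibility. -/
lemma toA_mul_add (a b c : G) :
    β.toA (a * β.add b c) = β.toA (a * b) + β.toA (a * c) - β.toA a := by
  have h := β.compat a b c
  have h' := congrArg β.toA h
  rw [toA_add, toA_add] at h'
  rw [← h']; abel

/-- `λ_a` is additive. -/
lemma lam_add (a b c : G) :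
    β.toA (β.lam a (β.add b c)) = β.toA (β.lam a b) + β.toA (β.lam a c) := by
  rw [toA_lam, toA_lam, toA_lam, toA_mul_add]; abel

@[simp] lemma lam_one_right (a : G) : β.lam a 1 = 1 := by
  apply β.toA_injective
  rw [toA_lam, mul_one, toA_one]; abel

lemma lam_neg (a b : G) : β.toA (β.lam a (β.neg b)) = -(β.toA (β.lam a b)) := by
  have hb : β.add b (β.neg b) = 1 :=
    β.toA_injective (by rw [toA_add, toA_neg, toA_one]; abel)
  have h := β.lam_add a b (β.neg b)
  rw [hb, lam_one_right, toA_one] at h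
  have h2 : β.toA (β.lam a b) + β.toA (β.lam a (β.neg b)) = 0 := h.symm
  rw [eq_neg_iff_add_eq_zero]
  exact (_root_.add_comm (β.toA (β.lam a (β.neg b))) (β.toA (β.lam a b))).trans h2

lemma lam_nsmul (a : G) (n : ℕ) (b : G) :
    β.toA (β.lam a (β.nsmul n b)) = n • β.toA (β.lam a b) := by
  induction n with
  | zero =>
      rw [show β.nsmul 0 b = 1 from rfl, lam_one_right, toA_one, zero_smul]
  | succ n ih =>
      rw [show β.nsmul (n+1) b = β.add b (β.nsmul n b) from rfl, lam_add, ih, succ_nsmul]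
      abel

/-- `λ` is multiplicative: `λ_{a∘b} = λ_a λ_b`. -/
lemma lam_mul (a b c : G) : β.lam (a * b) c = β.lam a (β.lam b c) := by
  apply β.toA_injective
  have hb : b * c = β.add b (β.lam b c) := β.toA_injective (β.toA_mul b c)
  have h1 : β.toA (a * (b * c)) = β.toA (a * b) + β.toA (a * β.lam b c) - β.toA a := by
    rw [hb, toA_mul_add]
  rw [toA_lam, toA_lam, mul_assoc, h1, β.toA_mul a (β.lam b c)]
  abel

@[simp] lemma lam_one_left (a : G) : β.lam 1 a = a := by
  apply β.toA_injective
  rw [toA_lam, one_mul, toA_one]; abel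

lemma lam_inv_lam (a b : G) : β.lam a⁻¹ (β.lam a b) = b := by
  rw [← lam_mul, inv_mul_cancel, lam_one_left]

lemma lam_lam_inv (a b : G) : β.lam a (β.lam a⁻¹ b) = b := by
  rw [← lam_mul, mul_inv_cancel, lam_one_left]

lemma lam_injective (a : G) : Function.Injective (β.lam a) := by
  intro x y h
  have := congrArg (β.lam a⁻¹) h
  rwa [lam_inv_lam, lam_inv_lam] at this

/-- If `λ_m = id` then multiplication by `m` is addition. -/
lemma mul_eq_add_of_lam_id {m : G} (hm : ∀ b, β.lam m b = b) (c : G) :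
    β.toA (m * c) = β.toA m + β.toA c := by
  rw [toA_mul, hm]

lemma neg_eq_inv_of_lam_id {m : G} (hm : ∀ b, β.lam m b = b) : β.neg m = m⁻¹ := by
  have h : m * β.neg m = 1 := by
    apply β.toA_injective
    rw [mul_eq_add_of_lam_id β hm, toA_neg, toA_one]
    abel
  exact (inv_eq_of_mul_eq_one_right h).symm

/-- If `λ_m = id` then powers of `m` are additive multiples. -/
lemma pow_eq_nsmul_of_lam_id {m : G} (hm : ∀ b, β.lam m b = b) (n : ℕ) :
    β.toA (m ^ n) = n • β.toA m := by
  induction n with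
  | zero => rw [pow_zero, toA_one, zero_smul]
  | succ n ih =>
      rw [pow_succ', mul_eq_add_of_lam_id β hm, ih, succ_nsmul]
      abel

/-- Membership in `addSylow` in additive terms. -/
lemma mem_addSylow {q : ℕ} {a : G} :
    a ∈ β.addSylow q ↔ ∃ k : ℕ, (q ^ k) • β.toA a = 0 := Iff.rfl

lemma addSylow_isAddSubgroup (q : ℕ) : β.IsAddSubgroup (β.addSylow q) := by
  refine ⟨⟨0, β.zero_add 1⟩, ?_, ?_⟩
  · rintro a ⟨k, hk⟩ b ⟨l, hl⟩
    refine ⟨k + l, ?_⟩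
    show (q ^ (k + l)) • β.toA (β.add a b) = 0
    have hk' : (q ^ k) • β.toA a = 0 := hk
    have hl' : (q ^ l) • β.toA b = 0 := hl
    have e1 : (q ^ k * q ^ l) • β.toA a = 0 := by rw [mul_comm, mul_smul, hk', smul_zero]
    have e2 : (q ^ k * q ^ l) • β.toA b = 0 := by rw [mul_smul, hl', smul_zero]
    rw [toA_add, smul_add, pow_add, e1, e2, add_zero]
  · rintro a ⟨k, hk⟩
    refine ⟨k, ?_⟩
    have hk' : (q ^ k) • β.toA a = 0 := hk
    show (q ^ k) • β.toA (β.neg a) = 0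
    rw [toA_neg, smul_neg, hk', neg_zero]

lemma lam_mem_addSylow {q : ℕ} (a : G) {b : G} (hb : b ∈ β.addSylow q) :
    β.lam a b ∈ β.addSylow q := by
  obtain ⟨k, hk⟩ := hb
  refine ⟨k, ?_⟩
  show (q ^ k) • β.toA (β.lam a b) = 0
  have h := β.lam_nsmul a (q ^ k) b
  rw [show β.nsmul (q^k) b = 1 from hk] at h
  rw [← h, lam_one_right, toA_one]

end BraceOps

/-! ### Auxiliary: the epimorphism `𝒢(X,r) → 𝒢(Ret(X,r))` and the induced brace -/

namespace YBE

variable {X Z : Type u}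

lemma sigma_apply_eq_of_sigma_eq (S : YBE X) (β : BraceOps ↥S.permGroup)
    (hβ : S.IsNaturalBrace β) (g : ↥S.permGroup) {x y : X}
    (h : S.σ x = S.σ y) : S.σ ((g : Equiv.Perm X) x) = S.σ ((g : Equiv.Perm X) y) := by
  have h1 : S.σg x = S.σg y := Subtype.ext h
  have h2 := hβ.lam_sigma g x
  have h3 := hβ.lam_sigma g y
  rw [h1] at h2
  exact congrArg Subtype.val ((h2.symm.trans h3) : S.σg _ = S.σg _)

/-- If `λ_m` fixes all the `σ_x`, then `λ_m = id`. -/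
lemma lam_eq_id (S : YBE X) (β : BraceOps ↥S.permGroup) (hβ : S.IsNaturalBrace β)
    {m : ↥S.permGroup}
    (hm : ∀ x : X, β.lam m (S.σg x) = S.σg x) : ∀ b, β.lam m b = b := by
  have : ∀ b : ↥S.permGroup, b ∈ {b | β.lam m b = b} := by
    apply hβ.add_gen
    · refine ⟨β.lam_one_right m, ?_, ?_⟩
      · intro a ha b hb
        apply β.toA_injective
        have := β.lam_add m a b
        rw [ha, hb] at this
        rw [this, β.toA_add]
      · intro a ha
        apply β.toA_injective
        have := β.lam_neg m a
        rw [ha] at this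
        rw [this, β.toA_neg]
    · exact hm
  exact this

/-! In this section, `f : X → Z` is a retraction map onto (a copy of) `Ret(X,r)`.
We only use the hypothesis `hr` that every `g ∈ 𝒢(X,r)` descends along `f`. -/

theorem _root_.Equiv.Perm.inv_apply_self {α : Type*} (f : Equiv.Perm α) (x : α) : f⁻¹ (f x) = x :=
  f.symm_apply_apply x

theorem _root_.Equiv.Perm.apply_inv_self {α : Type*} (f : Equiv.Perm α) (x : α) : f (f⁻¹ x) = x :=
  f.apply_symm_apply x

section Retract

variable (S : YBE X) (T : YBE Z) (f : X → Z)

lemma map_fiber (S : YBE X) (β : BraceOps ↥S.permGroup) (hβ : S.IsNaturalBrace β)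
    (f : X → Z) (hfib : ∀ x x' : X, f x = f x' ↔ S.σ x = S.σ x')
    (g : ↥S.permGroup) {x y : X} (h : f x = f y) :
    f ((g : Equiv.Perm X) x) = f ((g : Equiv.Perm X) y) :=
  (hfib _ _).mpr (sigma_apply_eq_of_sigma_eq S β hβ g ((hfib _ _).mp h))

/-- The map induced by `g` on `Z`. -/
noncomputable def phi0 (hsurj : Function.Surjective f) (g : ↥S.permGroup) : Z → Z :=
  fun z => f ((g : Equiv.Perm X) (Function.surjInv hsurj z))

lemma phi0_spec (hsurj : Function.Surjective f)
    (hr : ∀ (g : ↥S.permGroup) {x y : X}, f x = f y →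
      f ((g : Equiv.Perm X) x) = f ((g : Equiv.Perm X) y)) (g : ↥S.permGroup) (x : X) :
    phi0 S f hsurj g (f x) = f ((g : Equiv.Perm X) x) := by
  apply hr
  exact Function.surjInv_eq hsurj (f x)

/-- The permutation of `Z` induced by `g ∈ 𝒢(X,r)`. -/
noncomputable def PsiPerm (hsurj : Function.Surjective f)
    (hr : ∀ (g : ↥S.permGroup) {x y : X}, f x = f y →
      f ((g : Equiv.Perm X) x) = f ((g : Equiv.Perm X) y)) (g : ↥S.permGroup) :
    Equiv.Perm Z where
  toFun := phi0 S f hsurj g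
  invFun := phi0 S f hsurj g⁻¹
  left_inv := by
    intro z
    obtain ⟨x, rfl⟩ := hsurj z
    rw [phi0_spec S f hsurj hr, phi0_spec S f hsurj hr]
    have h1 : ((g⁻¹ : ↥S.permGroup) : Equiv.Perm X) = ((g : Equiv.Perm X))⁻¹ := rfl
    rw [h1, Equiv.Perm.inv_apply_self]
  right_inv := by
    intro z
    obtain ⟨x, rfl⟩ := hsurj z
    rw [phi0_spec S f hsurj hr, phi0_spec S f hsurj hr]
    have h1 : ((g⁻¹ : ↥S.permGroup) : Equiv.Perm X) = ((g : Equiv.Perm X))⁻¹ := rfl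
    rw [h1, Equiv.Perm.apply_inv_self]

/-- The homomorphism `𝒢(X,r) → Sym(Z)`. -/
noncomputable def Psi (hsurj : Function.Surjective f)
    (hr : ∀ (g : ↥S.permGroup) {x y : X}, f x = f y →
      f ((g : Equiv.Perm X) x) = f ((g : Equiv.Perm X) y)) : ↥S.permGroup →* Equiv.Perm Z :=
  MonoidHom.mk' (fun g => PsiPerm S f hsurj hr g) (by
    intro g h
    apply Equiv.ext
    intro z
    obtain ⟨x, rfl⟩ := hsurj z
    show phi0 S f hsurj (g * h) (f x)
      = phi0 S f hsurj g (phi0 S f hsurj h (f x))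
    rw [phi0_spec S f hsurj hr, phi0_spec S f hsurj hr, phi0_spec S f hsurj hr]
    rfl)

lemma Psi_apply (hsurj : Function.Surjective f)
    (hr : ∀ (g : ↥S.permGroup) {x y : X}, f x = f y →
      f ((g : Equiv.Perm X) x) = f ((g : Equiv.Perm X) y)) (g : ↥S.permGroup) (x : X) :
    Psi S f hsurj hr g (f x) = f ((g : Equiv.Perm X) x) :=
  phi0_spec S f hsurj hr g x

lemma Psi_sigma (hsurj : Function.Surjective f)
    (hr : ∀ (g : ↥S.permGroup) {x y : X}, f x = f y →
      f ((g : Equiv.Perm X) x) = f ((g : Equiv.Perm X) y)) (hhom : S.IsHom T f) (x : X) :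
    Psi S f hsurj hr (S.σg x) = T.σ (f x) := by
  apply Equiv.ext
  intro z
  obtain ⟨y, rfl⟩ := hsurj z
  rw [Psi_apply]
  exact hhom x y

lemma Psi_mem (hsurj : Function.Surjective f)
    (hr : ∀ (g : ↥S.permGroup) {x y : X}, f x = f y →
      f ((g : Equiv.Perm X) x) = f ((g : Equiv.Perm X) y)) (hhom : S.IsHom T f)
    (g : ↥S.permGroup) :
    Psi S f hsurj hr g ∈ T.permGroup := by
  obtain ⟨gv, hg⟩ := g
  revert hg
  refine fun hg => Subgroup.closure_induction
    (p := fun gv hg => Psi S f hsurj hr ⟨gv, hg⟩ ∈ T.permGroup) ?_ ?_ ?_ ?_ hg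
  · rintro w ⟨x, rfl⟩
    have h1 : (⟨S.σ x, Subgroup.subset_closure (Set.mem_range_self x)⟩ : ↥S.permGroup)
        = S.σg x := rfl
    rw [h1, Psi_sigma S T f hsurj hr hhom]
    exact Subgroup.subset_closure (Set.mem_range_self (f x))
  · show Psi S f hsurj hr ⟨1, (S.permGroup).one_mem⟩ ∈ T.permGroup
    have h1 : (⟨1, (S.permGroup).one_mem⟩ : ↥S.permGroup) = 1 := rfl
    rw [h1, map_one]
    exact (T.permGroup).one_mem
  · intro a b ha hb hpa hpb
    have h1 : (⟨a * b, mul_mem ha hb⟩ : ↥S.permGroup) = ⟨a, ha⟩ * ⟨b, hb⟩ := rfl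
    rw [h1, map_mul]
    exact mul_mem hpa hpb
  · intro a ha hpa
    have h1 : (⟨a⁻¹, inv_mem ha⟩ : ↥S.permGroup) = (⟨a, ha⟩ : ↥S.permGroup)⁻¹ := rfl
    rw [h1, map_inv]
    exact inv_mem hpa

/-- The epimorphism `Φ : 𝒢(X,r) → 𝒢(Ret(X,r))`. -/
noncomputable def Phi (hsurj : Function.Surjective f)
    (hr : ∀ (g : ↥S.permGroup) {x y : X}, f x = f y →
      f ((g : Equiv.Perm X) x) = f ((g : Equiv.Perm X) y)) (hhom : S.IsHom T f) :
    ↥S.permGroup →* ↥T.permGroup :=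
  (Psi S f hsurj hr).codRestrict T.permGroup (Psi_mem S T f hsurj hr hhom)

variable (hsurj : Function.Surjective f)
variable (hr : ∀ (g : ↥S.permGroup) {x y : X}, f x = f y →
    f ((g : Equiv.Perm X) x) = f ((g : Equiv.Perm X) y))
variable (hhom : S.IsHom T f)

lemma Phi_coe (g : ↥S.permGroup) :
    (Phi S T f hsurj hr hhom g : Equiv.Perm Z) = Psi S f hsurj hr g := rfl

lemma Phi_sigma (x : X) : Phi S T f hsurj hr hhom (S.σg x) = T.σg (f x) :=
  Subtype.ext (Psi_sigma S T f hsurj hr hhom x)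

lemma Phi_surjective : Function.Surjective (Phi S T f hsurj hr hhom) := by
  intro u
  obtain ⟨uv, hu⟩ := u
  revert hu
  refine fun hu => Subgroup.closure_induction
    (p := fun uv hu => ∃ g, Phi S T f hsurj hr hhom g = ⟨uv, hu⟩) ?_ ?_ ?_ ?_ hu
  · rintro w ⟨z, rfl⟩
    obtain ⟨x, rfl⟩ := hsurj z
    exact ⟨S.σg x, Subtype.ext (Psi_sigma S T f hsurj hr hhom x)⟩
  · exact ⟨1, map_one _⟩
  · rintro a b ha hb ⟨g, hg⟩ ⟨g', hg'⟩
    refine ⟨g * g', ?_⟩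
    rw [map_mul, hg, hg']
    rfl
  · rintro a ha ⟨g, hg⟩
    refine ⟨g⁻¹, ?_⟩
    rw [map_inv, hg]
    rfl

lemma mem_ker_iff (g : ↥S.permGroup) :
    Phi S T f hsurj hr hhom g = 1 ↔ ∀ x : X, f ((g : Equiv.Perm X) x) = f x := by
  constructor
  · intro h x
    have h2 := congrArg (fun u : ↥T.permGroup => (u : Equiv.Perm Z) (f x)) h
    simpa [Phi_coe, Psi_apply S f hsurj hr g x] using h2
  · intro h
    apply Subtype.ext
    apply Equiv.ext
    intro z
    obtain ⟨x, rfl⟩ := hsurj z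
    show Psi S f hsurj hr g (f x) = f x
    rw [Psi_apply]
    exact h x

/-- Kernel elements have trivial lambda map. -/
lemma ker_lam_id (β : BraceOps ↥S.permGroup) (hβ : S.IsNaturalBrace β)
    (hfib : ∀ x x' : X, f x = f x' ↔ S.σ x = S.σ x')
    {m : ↥S.permGroup} (hm : Phi S T f hsurj hr hhom m = 1) :
    ∀ b, β.lam m b = b := by
  apply lam_eq_id S β hβ
  intro x
  rw [hβ.lam_sigma m x]
  apply Subtype.ext
  exact (hfib _ _).mp (((mem_ker_iff S T f hsurj hr hhom m).mp hm) x)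

end Retract

end YBE

/-! ### Auxiliary: the natural brace structure on `𝒢(Ret(X,r))` -/

namespace YBE

variable {X Z : Type u}

section RetractBrace

variable (S : YBE X) (T : YBE Z) (β : BraceOps ↥S.permGroup) (f : X → Z)
variable (hsurj : Function.Surjective f)
variable (hr : ∀ (g : ↥S.permGroup) {x y : X}, f x = f y →
    f ((g : Equiv.Perm X) x) = f ((g : Equiv.Perm X) y))
variable (hhom : S.IsHom T f)

/-- Elements of the kernel of `Φ` act additively. -/
lemma ker_toA_mul (hβ : S.IsNaturalBrace β)
    (hfib : ∀ x x' : X, f x = f x' ↔ S.σ x = S.σ x')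
    {m : ↥S.permGroup} (hm : Phi S T f hsurj hr hhom m = 1) (c : ↥S.permGroup) :
    β.toA (m * c) = β.toA m + β.toA c :=
  β.mul_eq_add_of_lam_id (ker_lam_id S T f hsurj hr hhom β hβ hfib hm) c

lemma Phi_wd_add (hβ : S.IsNaturalBrace β)
    (hfib : ∀ x x' : X, f x = f x' ↔ S.σ x = S.σ x')
    {a a' b b' : ↥S.permGroup}
    (ha : Phi S T f hsurj hr hhom a = Phi S T f hsurj hr hhom a')
    (hb : Phi S T f hsurj hr hhom b = Phi S T f hsurj hr hhom b') :
    Phi S T f hsurj hr hhom (β.add a b) = Phi S T f hsurj hr hhom (β.add a' b') := by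
  set Φ := Phi S T f hsurj hr hhom with hΦ
  have hm : Φ (a' * a⁻¹) = 1 := by rw [map_mul, map_inv, ← ha, mul_inv_cancel]
  have hm' : Φ (b' * b⁻¹) = 1 := by rw [map_mul, map_inv, ← hb, mul_inv_cancel]
  set m := a' * a⁻¹ with hmdef
  set m' := b' * b⁻¹ with hm'def
  have hla : ∀ c, β.lam m c = c := ker_lam_id S T f hsurj hr hhom β hβ hfib hm
  have hlb : ∀ c, β.lam m' c = c := ker_lam_id S T f hsurj hr hhom β hβ hfib hm'
  have ha' : a' = m * a := by rw [hmdef, inv_mul_cancel_right]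
  have hb' : b' = m' * b := by rw [hm'def, inv_mul_cancel_right]
  have key : β.add a' b' = (m * m') * β.add a b := by
    apply β.toA_injective
    rw [β.toA_mul (m * m'), β.toA_add, ha', hb',
      β.mul_eq_add_of_lam_id hla a, β.mul_eq_add_of_lam_id hlb b,
      β.lam_mul, hlb, hla, β.toA_add, β.mul_eq_add_of_lam_id hla m']
    abel
  rw [key, map_mul, map_mul, hm, hm', one_mul, one_mul]

lemma Phi_wd_neg (hβ : S.IsNaturalBrace β)
    (hfib : ∀ x x' : X, f x = f x' ↔ S.σ x = S.σ x')
    {a a' : ↥S.permGroup}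
    (ha : Phi S T f hsurj hr hhom a = Phi S T f hsurj hr hhom a') :
    Phi S T f hsurj hr hhom (β.neg a) = Phi S T f hsurj hr hhom (β.neg a') := by
  set Φ := Phi S T f hsurj hr hhom with hΦ
  have hm : Φ (a' * a⁻¹) = 1 := by rw [map_mul, map_inv, ← ha, mul_inv_cancel]
  set m := a' * a⁻¹ with hmdef
  have hla : ∀ c, β.lam m c = c := ker_lam_id S T f hsurj hr hhom β hβ hfib hm
  have hminv : Φ m⁻¹ = 1 := by rw [map_inv, hm, inv_one]
  have hlainv : ∀ c, β.lam m⁻¹ c = c := ker_lam_id S T f hsurj hr hhom β hβ hfib hminv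
  have ha' : a' = m * a := by rw [hmdef, inv_mul_cancel_right]
  have key : β.neg a' = m⁻¹ * β.neg a := by
    apply β.toA_injective
    rw [β.mul_eq_add_of_lam_id hlainv, β.toA_neg, β.toA_neg, ha',
      β.mul_eq_add_of_lam_id hla a]
    have : β.toA m⁻¹ = -(β.toA m) := by
      rw [← β.neg_eq_inv_of_lam_id hla, β.toA_neg]
    rw [this]
    abel
  rw [key, map_mul, hminv, one_mul]

/-- A set-theoretic section of `Φ`. -/
noncomputable def PhiSec (u : ↥T.permGroup) : ↥S.permGroup :=
  Function.surjInv (Phi_surjective S T f hsurj hr hhom) u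

lemma Phi_sec (u : ↥T.permGroup) :
    Phi S T f hsurj hr hhom (PhiSec S T f hsurj hr hhom u) = u :=
  Function.surjInv_eq (Phi_surjective S T f hsurj hr hhom) u

/-- The transported addition on `𝒢(Ret(X,r))`. -/
noncomputable def radd (u v : ↥T.permGroup) : ↥T.permGroup :=
  Phi S T f hsurj hr hhom
    (β.add (PhiSec S T f hsurj hr hhom u) (PhiSec S T f hsurj hr hhom v))

/-- The transported negation on `𝒢(Ret(X,r))`. -/
noncomputable def rneg (u : ↥T.permGroup) : ↥T.permGroup :=
  Phi S T f hsurj hr hhom (β.neg (PhiSec S T f hsurj hr hhom u))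

lemma radd_Phi (hβ : S.IsNaturalBrace β)
    (hfib : ∀ x x' : X, f x = f x' ↔ S.σ x = S.σ x') (a b : ↥S.permGroup) :
    radd S T β f hsurj hr hhom (Phi S T f hsurj hr hhom a) (Phi S T f hsurj hr hhom b)
      = Phi S T f hsurj hr hhom (β.add a b) :=
  Phi_wd_add S T β f hsurj hr hhom hβ hfib (Phi_sec S T f hsurj hr hhom _)
    (Phi_sec S T f hsurj hr hhom _)

lemma rneg_Phi (hβ : S.IsNaturalBrace β)
    (hfib : ∀ x x' : X, f x = f x' ↔ S.σ x = S.σ x') (a : ↥S.permGroup) :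
    rneg S T β f hsurj hr hhom (Phi S T f hsurj hr hhom a)
      = Phi S T f hsurj hr hhom (β.neg a) :=
  Phi_wd_neg S T β f hsurj hr hhom hβ hfib (Phi_sec S T f hsurj hr hhom _)

/-- The natural brace structure on `𝒢(Ret(X,r))`, transported along `Φ`. -/
noncomputable def retBrace (hβ : S.IsNaturalBrace β)
    (hfib : ∀ x x' : X, f x = f x' ↔ S.σ x = S.σ x') : BraceOps ↥T.permGroup where
  add := radd S T β f hsurj hr hhom
  neg := rneg S T β f hsurj hr hhom
  add_assoc := by
    intro u v w
    obtain ⟨a, rfl⟩ := Phi_surjective S T f hsurj hr hhom u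
    obtain ⟨b, rfl⟩ := Phi_surjective S T f hsurj hr hhom v
    obtain ⟨c, rfl⟩ := Phi_surjective S T f hsurj hr hhom w
    rw [radd_Phi S T β f hsurj hr hhom hβ hfib a b,
      radd_Phi S T β f hsurj hr hhom hβ hfib b c,
      radd_Phi S T β f hsurj hr hhom hβ hfib,
      radd_Phi S T β f hsurj hr hhom hβ hfib, β.add_assoc]
  add_comm := by
    intro u v
    obtain ⟨a, rfl⟩ := Phi_surjective S T f hsurj hr hhom u
    obtain ⟨b, rfl⟩ := Phi_surjective S T f hsurj hr hhom v
    rw [radd_Phi S T β f hsurj hr hhom hβ hfib, radd_Phi S T β f hsurj hr hhom hβ hfib,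
      β.add_comm]
  zero_add := by
    intro u
    obtain ⟨a, rfl⟩ := Phi_surjective S T f hsurj hr hhom u
    have h1 : (1 : ↥T.permGroup) = Phi S T f hsurj hr hhom 1 := (map_one _).symm
    rw [h1, radd_Phi S T β f hsurj hr hhom hβ hfib, β.zero_add]
  neg_add_cancel := by
    intro u
    obtain ⟨a, rfl⟩ := Phi_surjective S T f hsurj hr hhom u
    rw [rneg_Phi S T β f hsurj hr hhom hβ hfib, radd_Phi S T β f hsurj hr hhom hβ hfib,
      β.neg_add_cancel, map_one]
  compat := by
    intro u v w
    obtain ⟨a, rfl⟩ := Phi_surjective S T f hsurj hr hhom u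
    obtain ⟨b, rfl⟩ := Phi_surjective S T f hsurj hr hhom v
    obtain ⟨c, rfl⟩ := Phi_surjective S T f hsurj hr hhom w
    rw [radd_Phi S T β f hsurj hr hhom hβ hfib, ← map_mul,
      radd_Phi S T β f hsurj hr hhom hβ hfib, ← map_mul, ← map_mul,
      radd_Phi S T β f hsurj hr hhom hβ hfib, β.compat]

lemma Phi_add (hβ : S.IsNaturalBrace β)
    (hfib : ∀ x x' : X, f x = f x' ↔ S.σ x = S.σ x') (a b : ↥S.permGroup) :
    Phi S T f hsurj hr hhom (β.add a b)
      = (retBrace S T β f hsurj hr hhom hβ hfib).add (Phi S T f hsurj hr hhom a)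
          (Phi S T f hsurj hr hhom b) :=
  (radd_Phi S T β f hsurj hr hhom hβ hfib a b).symm

lemma Phi_neg (hβ : S.IsNaturalBrace β)
    (hfib : ∀ x x' : X, f x = f x' ↔ S.σ x = S.σ x') (a : ↥S.permGroup) :
    Phi S T f hsurj hr hhom (β.neg a)
      = (retBrace S T β f hsurj hr hhom hβ hfib).neg (Phi S T f hsurj hr hhom a) :=
  (rneg_Phi S T β f hsurj hr hhom hβ hfib a).symm

lemma Phi_lam (hβ : S.IsNaturalBrace β)
    (hfib : ∀ x x' : X, f x = f x' ↔ S.σ x = S.σ x') (a b : ↥S.permGroup) :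
    Phi S T f hsurj hr hhom (β.lam a b)
      = (retBrace S T β f hsurj hr hhom hβ hfib).lam (Phi S T f hsurj hr hhom a)
          (Phi S T f hsurj hr hhom b) := by
  show Phi S T f hsurj hr hhom (β.add (β.neg a) (a * b)) = _
  rw [Phi_add S T β f hsurj hr hhom hβ hfib, Phi_neg S T β f hsurj hr hhom hβ hfib]
  show _ = (retBrace S T β f hsurj hr hhom hβ hfib).add _ _
  rw [map_mul]

lemma Phi_nsmul (hβ : S.IsNaturalBrace β)
    (hfib : ∀ x x' : X, f x = f x' ↔ S.σ x = S.σ x') (n : ℕ) (a : ↥S.permGroup) :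
    Phi S T f hsurj hr hhom (β.nsmul n a)
      = (retBrace S T β f hsurj hr hhom hβ hfib).nsmul n (Phi S T f hsurj hr hhom a) := by
  induction n with
  | zero => exact map_one _
  | succ n ih =>
      show Phi S T f hsurj hr hhom (β.add a (β.nsmul n a)) = _
      rw [Phi_add S T β f hsurj hr hhom hβ hfib, ih]
      rfl

/-- The transported brace is the natural brace of the retract. -/
lemma retBrace_natural (hβ : S.IsNaturalBrace β)
    (hfib : ∀ x x' : X, f x = f x' ↔ S.σ x = S.σ x') : T.IsNaturalBrace (retBrace S T β f hsurj hr hhom hβ hfib) := by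
  constructor
  · intro u z
    obtain ⟨g, rfl⟩ := Phi_surjective S T f hsurj hr hhom u
    obtain ⟨x, rfl⟩ := hsurj z
    have h1 : T.σg (f x) = Phi S T f hsurj hr hhom (S.σg x) :=
      (Phi_sigma S T f hsurj hr hhom x).symm
    rw [h1, ← Phi_lam S T β f hsurj hr hhom hβ hfib, hβ.lam_sigma g x,
      Phi_sigma S T f hsurj hr hhom]
    have h2 : ((Phi S T f hsurj hr hhom g : ↥T.permGroup) : Equiv.Perm Z) (f x)
        = f ((g : Equiv.Perm X) x) := Psi_apply S f hsurj hr g x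
    rw [h2]
  · intro A hA hsig u
    obtain ⟨g, rfl⟩ := Phi_surjective S T f hsurj hr hhom u
    have : ∀ g' : ↥S.permGroup, g' ∈ (Phi S T f hsurj hr hhom) ⁻¹' A := by
      apply hβ.add_gen
      · refine ⟨?_, ?_, ?_⟩
        · show Phi S T f hsurj hr hhom 1 ∈ A
          rw [map_one]
          exact hA.1
        · intro a ha b hb
          show Phi S T f hsurj hr hhom (β.add a b) ∈ A
          rw [Phi_add S T β f hsurj hr hhom hβ hfib]
          exact hA.2.1 _ ha _ hb
        · intro a ha
          show Phi S T f hsurj hr hhom (β.neg a) ∈ A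
          rw [Phi_neg S T β f hsurj hr hhom hβ hfib]
          exact hA.2.2 _ ha
      · intro x
        show Phi S T f hsurj hr hhom (S.σg x) ∈ A
        rw [Phi_sigma S T f hsurj hr hhom]
        exact hsig (f x)
    exact this g

end RetractBrace

end YBE

/-! ### Auxiliary: fibers, the kernel subgroup, and its exponent -/

namespace YBE

variable {X Z : Type u}

section Kernel

variable (S : YBE X) (f : X → Z)

/-- The subgroup of `𝒢(X,r)` (viewed inside `Sym(X)`) acting trivially on the fibers
of the retraction `f`. -/
def kerPerm : Subgroup (Equiv.Perm X) where
  carrier := {e | e ∈ S.permGroup ∧ ∀ x, f (e x) = f x}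
  one_mem' := ⟨(S.permGroup).one_mem, fun x => rfl⟩
  mul_mem' := by
    rintro a b ⟨haG, ha⟩ ⟨hbG, hb⟩
    exact ⟨mul_mem haG hbG, fun x => by rw [Equiv.Perm.mul_apply, ha, hb]⟩
  inv_mem' := by
    rintro a ⟨haG, ha⟩
    refine ⟨inv_mem haG, fun x => ?_⟩
    have h2 := ha (a⁻¹ x)
    rw [Equiv.Perm.apply_inv_self] at h2
    exact h2.symm

lemma kerPerm_lam_id (β : BraceOps ↥S.permGroup) (hβ : S.IsNaturalBrace β)
    (hfib : ∀ x x' : X, f x = f x' ↔ S.σ x = S.σ x')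
    {m : ↥S.permGroup} (hm : ∀ x, f ((m : Equiv.Perm X) x) = f x) :
    ∀ b, β.lam m b = b := by
  apply lam_eq_id S β hβ
  intro x
  rw [hβ.lam_sigma m x]
  exact Subtype.ext ((hfib _ _).mp (hm x))

lemma conj_mem_kerPerm
    (hr : ∀ (g : ↥S.permGroup) {x y : X}, f x = f y →
      f ((g : Equiv.Perm X) x) = f ((g : Equiv.Perm X) y))
    (g : ↥S.permGroup) {e : Equiv.Perm X} (he : e ∈ kerPerm S f) :
    (g : Equiv.Perm X) * e * (g : Equiv.Perm X)⁻¹ ∈ kerPerm S f := by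
  constructor
  · have : (g : Equiv.Perm X) ∈ S.permGroup := g.2
    exact mul_mem (mul_mem this he.1) (inv_mem this)
  · intro x
    have h1 : f (e ((g : Equiv.Perm X)⁻¹ x)) = f ((g : Equiv.Perm X)⁻¹ x) := he.2 _
    have h2 := hr g h1
    rw [Equiv.Perm.apply_inv_self] at h2
    simpa [Equiv.Perm.mul_apply] using h2

/-- Fibers of the retraction all have the same cardinality. -/
lemma fiber_card_eq
    (hr : ∀ (g : ↥S.permGroup) {x y : X}, f x = f y →
      f ((g : Equiv.Perm X) x) = f ((g : Equiv.Perm X) y))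
    (hind : S.Indecomposable) (x y : X) :
    Nat.card {w : X // f w = f x} = Nat.card {w : X // f w = f y} := by
  obtain ⟨g0, hg0, hgx⟩ := hind x y
  set g : ↥S.permGroup := ⟨g0, hg0⟩ with hgdef
  have hco : (g : Equiv.Perm X) = g0 := rfl
  apply Nat.card_congr
  refine ⟨fun w => ⟨g0 w.1, ?_⟩, fun v => ⟨g0⁻¹ v.1, ?_⟩, ?_, ?_⟩
  · have := hr g w.2
    rw [hco] at this
    rw [this, hgx]
  · have h1 : f (((g⁻¹ : ↥S.permGroup) : Equiv.Perm X) v.1)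
        = f (((g⁻¹ : ↥S.permGroup) : Equiv.Perm X) y) := hr g⁻¹ v.2
    have h2 : ((g⁻¹ : ↥S.permGroup) : Equiv.Perm X) = g0⁻¹ := rfl
    rw [h2] at h1
    rw [h1, ← hgx, Equiv.Perm.inv_apply_self]
  · intro w
    apply Subtype.ext
    exact Equiv.Perm.inv_apply_self g0 w.1
  · intro v
    apply Subtype.ext
    exact Equiv.Perm.apply_inv_self g0 v.1

/-- Counting points of `X` fiberwise: `|X| = |Z| · k`. -/
lemma card_eq_card_mul_fiber [Finite X] (hsurj : Function.Surjective f)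
    (hr : ∀ (g : ↥S.permGroup) {x y : X}, f x = f y →
      f ((g : Equiv.Perm X) x) = f ((g : Equiv.Perm X) y))
    (hind : S.Indecomposable) (x₀ : X) :
    Nat.card X = Nat.card Z * Nat.card {w : X // f w = f x₀} := by
  classical
  haveI : Fintype X := Fintype.ofFinite X
  haveI : Finite Z := Finite.of_surjective f hsurj
  haveI : Fintype Z := Fintype.ofFinite Z
  have h1 : (Finset.univ : Finset X).card
      = ∑ z ∈ (Finset.univ : Finset Z), (Finset.univ.filter (fun w => f w = z)).card :=
    Finset.card_eq_sum_card_fiberwise (fun x _ => Finset.mem_univ (f x))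
  have h2 : ∀ z : Z, (Finset.univ.filter (fun w => f w = z)).card
      = Nat.card {w : X // f w = f x₀} := by
    intro z
    obtain ⟨xz, rfl⟩ := hsurj z
    rw [← Fintype.card_subtype, ← Nat.card_eq_fintype_card]
    exact fiber_card_eq S f hr hind xz x₀
  rw [Nat.card_eq_fintype_card, ← Finset.card_univ, h1]
  rw [Finset.sum_congr rfl (fun z _ => h2 z), Finset.sum_const, Finset.card_univ,
    ← Nat.card_eq_fintype_card, smul_eq_mul]

/-- Key geometric fact: any element of the kernel of `Φ` is annihilated by `k` in the
additive group, where `k` is the common cardinality of the fibers. -/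
lemma ker_nsmul_eq_one [Finite X] (β : BraceOps ↥S.permGroup) (hβ : S.IsNaturalBrace β)
    (hfib : ∀ x x' : X, f x = f x' ↔ S.σ x = S.σ x')
    (hr : ∀ (g : ↥S.permGroup) {x y : X}, f x = f y →
      f ((g : Equiv.Perm X) x) = f ((g : Equiv.Perm X) y))
    (hind : S.Indecomposable) (x₀ : X)
    {m : ↥S.permGroup} (hm : ∀ x, f ((m : Equiv.Perm X) x) = f x) :
    β.nsmul (Nat.card {w : X // f w = f x₀}) m = 1 := by
  classical
  haveI : Fintype X := Fintype.ofFinite X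
  set K := kerPerm S f with hKdef
  have hmK : (m : Equiv.Perm X) ∈ K := ⟨m.2, hm⟩
  have hsmul : ∀ (n : ↥K) (w : X), n • w = (n : Equiv.Perm X) w := fun _ _ => rfl
  have hKfib : ∀ (n : ↥K) (w : X), f ((n : Equiv.Perm X) w) = f w := fun n w => n.2.2 w
  -- commutativity of K
  have hcomm : ∀ a b : ↥K, a * b = b * a := by
    intro a b
    have ha' : (a : Equiv.Perm X) ∈ S.permGroup := a.2.1
    have hb' : (b : Equiv.Perm X) ∈ S.permGroup := b.2.1
    set a' : ↥S.permGroup := ⟨a, ha'⟩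
    set b' : ↥S.permGroup := ⟨b, hb'⟩
    have hla : ∀ c, β.lam a' c = c := kerPerm_lam_id S f β hβ hfib (fun x => a.2.2 x)
    have hlb : ∀ c, β.lam b' c = c := kerPerm_lam_id S f β hβ hfib (fun x => b.2.2 x)
    have : a' * b' = b' * a' := by
      apply β.toA_injective
      rw [β.mul_eq_add_of_lam_id hla, β.mul_eq_add_of_lam_id hlb]
      abel
    have hv : (a : Equiv.Perm X) * b = (b : Equiv.Perm X) * a := congrArg Subtype.val this
    exact Subtype.ext hv
  -- orbit sizes are constant
  have horbcard : ∀ x y : X,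
      (MulAction.orbit ↥K y).ncard = (MulAction.orbit ↥K x).ncard := by
    intro x y
    obtain ⟨g0, hg0, hgx⟩ := hind x y
    have himg : (g0 : Equiv.Perm X) '' (MulAction.orbit ↥K x) = MulAction.orbit ↥K y := by
      ext v
      constructor
      · rintro ⟨w, ⟨n, rfl⟩, rfl⟩
        have hn' : g0 * (n : Equiv.Perm X) * g0⁻¹ ∈ K :=
          conj_mem_kerPerm S f hr ⟨g0, hg0⟩ n.2
        refine ⟨⟨g0 * (n : Equiv.Perm X) * g0⁻¹, hn'⟩, ?_⟩
        show (⟨g0 * (n : Equiv.Perm X) * g0⁻¹, hn'⟩ : ↥K) • y = g0 (n • x)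
        rw [hsmul, hsmul, ← hgx]
        simp [Equiv.Perm.mul_apply]
      · rintro ⟨n, rfl⟩
        have hn' : g0⁻¹ * (n : Equiv.Perm X) * g0 ∈ K := by
          have := conj_mem_kerPerm S f hr ⟨g0, hg0⟩⁻¹ n.2
          simpa using this
        refine ⟨(⟨g0⁻¹ * (n : Equiv.Perm X) * g0, hn'⟩ : ↥K) • x, ⟨_, rfl⟩, ?_⟩
        show g0 ((⟨g0⁻¹ * (n : Equiv.Perm X) * g0, hn'⟩ : ↥K) • x) = n • y
        rw [hsmul, hsmul, ← hgx]
        simp [Equiv.Perm.mul_apply]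
    rw [← himg, Set.ncard_image_of_injective _ (Equiv.injective _)]
  -- each fiber is partitioned into orbits of constant size, so the orbit size divides k
  have hk : ∀ x : X, Nat.card {w : X // f w = f x}
      = Nat.card {w : X // f w = f x₀} := fun x => fiber_card_eq S f hr hind x x₀
  set k := Nat.card {w : X // f w = f x₀} with hkdef
  have tdvd : ∀ x : X, (MulAction.orbit ↥K x).ncard ∣ k := by
    intro x
    set c : X → Quotient (MulAction.orbitRel ↥K X) := Quotient.mk'' with hcdef
    set F : Finset X := Finset.univ.filter (fun w => f w = f x) with hFdef
    have hcount : F.card = ∑ q ∈ F.image c, (F.filter (fun w => c w = q)).card :=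
      Finset.card_eq_sum_card_fiberwise (fun w hw => Finset.mem_image_of_mem c hw)
    have hfibcard : ∀ q ∈ F.image c,
        (F.filter (fun w => c w = q)).card = (MulAction.orbit ↥K x).ncard := by
      intro q hq
      obtain ⟨y, hyF, rfl⟩ := Finset.mem_image.mp hq
      have hyfib : f y = f x := (Finset.mem_filter.mp hyF).2
      have hEq : F.filter (fun w => c w = c y)
          = (Set.toFinite (MulAction.orbit ↥K y)).toFinset := by
        ext w
        rw [Finset.mem_filter, Set.Finite.mem_toFinset]
        constructor
        · rintro ⟨-, hcw⟩
          exact MulAction.orbitRel_apply.mp (Quotient.eq''.mp hcw)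
        · intro hw
          refine ⟨?_, Quotient.eq''.mpr (MulAction.orbitRel_apply.mpr hw)⟩
          obtain ⟨n, rfl⟩ := hw
          rw [Finset.mem_filter]
          refine ⟨Finset.mem_univ _, ?_⟩
          show f (n • y) = f x
          rw [hsmul, hKfib, hyfib]
      rw [hEq, ← Set.ncard_eq_toFinset_card _ (Set.toFinite _), horbcard x y]
    have hcard : F.card = (F.image c).card * (MulAction.orbit ↥K x).ncard := by
      rw [hcount, Finset.sum_congr rfl hfibcard, Finset.sum_const, smul_eq_mul]
    have hFk : F.card = k := by
      rw [hFdef, ← Fintype.card_subtype, ← Nat.card_eq_fintype_card, hk x]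
    exact Dvd.intro_left _ (by rw [← hcard, hFk])
  -- the permutation m has order dividing k
  have key : ∀ x : X, ((m : Equiv.Perm X) ^ k) x = x := by
    intro x
    set mK : ↥K := ⟨(m : Equiv.Perm X), hmK⟩ with hmKdef
    haveI : (MulAction.stabilizer ↥K x).Normal := by
      constructor
      intro n hn g
      rw [hcomm g n, mul_inv_cancel_right]
      exact hn
    have h1 : mK ^ (MulAction.stabilizer ↥K x).index ∈ MulAction.stabilizer ↥K x :=
      Subgroup.pow_index_mem _ _
    have h2 : (mK ^ (MulAction.stabilizer ↥K x).index) • x = x :=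
      MulAction.mem_stabilizer_iff.mp h1
    set t := (MulAction.stabilizer ↥K x).index with htdef
    have h3 : ((m : Equiv.Perm X) ^ t) x = x := by
      have := h2
      rw [hsmul] at this
      rwa [Subgroup.coe_pow] at this
    have h4 : t ∣ k := by
      rw [htdef, MulAction.index_stabilizer]
      exact tdvd x
    obtain ⟨s, hs⟩ := h4
    rw [hs, pow_mul]
    clear hs
    induction s with
    | zero => simp
    | succ s ih =>
        rw [pow_succ, Equiv.Perm.mul_apply, h3]
        exact ih
  -- conclude
  have hperm : (m : Equiv.Perm X) ^ k = 1 := Equiv.ext fun x => key x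
  have hpow : m ^ k = 1 := by
    apply Subtype.ext
    rw [Subgroup.coe_pow _ m k]
    exact hperm
  have hlam : ∀ b, β.lam m b = b := kerPerm_lam_id S f β hβ hfib hm
  apply β.toA_injective
  rw [β.toA_nsmul, ← β.pow_eq_nsmul_of_lam_id hlam, hpow, β.toA_one]

end Kernel

end YBE

/-! ### The core induction: additive exponent and triviality of the Sylow subgroups -/

namespace YBE

lemma core : ∀ (m : ℕ) (X : Type u) (S : YBE X) (β : BraceOps ↥S.permGroup),
    S.IsNaturalBrace β → Squarefree (Nat.card X) → S.Indecomposable → MPLevelLE m X S →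
    (∀ a, β.nsmul (Nat.card X) a = 1) ∧
    (∀ q : ℕ, Nat.Prime q → ∀ a ∈ β.addSylow q, ∀ b ∈ β.addSylow q, β.lam a b = b) := by
  intro m
  induction m with
  | zero =>
      intro X S β hβ hsq hind hlev
      obtain ⟨hne, hsub⟩ := hlev
      have htriv : ∀ g : ↥S.permGroup, g = 1 := by
        intro g
        apply Subtype.ext
        apply Equiv.ext
        intro x
        exact Subsingleton.elim _ _
      constructor
      · intro a
        exact htriv _
      · intro q hq a _ b _
        exact (htriv _).trans (htriv b).symm
  | succ m IH =>
      intro X S β hβ hsq hind hlev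
      obtain ⟨Z, T, ⟨f, hsurj, hhom, hfib⟩, hmT⟩ := hlev
      have hr : ∀ (g : ↥S.permGroup) {x y : X}, f x = f y →
          f ((g : Equiv.Perm X) x) = f ((g : Equiv.Perm X) y) :=
        fun g {x y} h => map_fiber S β hβ f hfib g h
      -- finiteness
      have hX0 : Nat.card X ≠ 0 := by
        intro h
        rw [h] at hsq
        exact not_squarefree_zero hsq
      haveI hfinX : Finite X := Nat.finite_of_card_ne_zero hX0
      haveI hneX : Nonempty X := (Nat.card_pos_iff.mp (Nat.pos_of_ne_zero hX0)).1
      -- the transported brace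
      set βT := retBrace S T β f hsurj hr hhom hβ hfib with hβTdef
      have hβT : T.IsNaturalBrace βT := retBrace_natural S T β f hsurj hr hhom hβ hfib
      -- indecomposability of the retract
      have hindT : T.Indecomposable := by
        intro z z'
        obtain ⟨x, rfl⟩ := hsurj z
        obtain ⟨x', rfl⟩ := hsurj z'
        obtain ⟨g0, hg0, hgx⟩ := hind x x'
        refine ⟨Psi S f hsurj hr ⟨g0, hg0⟩, Psi_mem S T f hsurj hr hhom ⟨g0, hg0⟩, ?_⟩
        rw [Psi_apply]
        show f (g0 x) = f x'
        rw [hgx]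
      -- counting
      let x₀ : X := Classical.arbitrary X
      set k := Nat.card {w : X // f w = f x₀} with hkdef
      have hcount : Nat.card X = Nat.card Z * k :=
        card_eq_card_mul_fiber S f hsurj hr hind x₀
      have hdvdZ : Nat.card Z ∣ Nat.card X := ⟨k, hcount⟩
      have hsqZ : Squarefree (Nat.card Z) := hsq.squarefree_of_dvd hdvdZ
      obtain ⟨IH1, IH2⟩ := IH Z T βT hβT hsqZ hindT hmT
      constructor
      · -- additive exponent divides |X|
        intro a
        have h1 : Phi S T f hsurj hr hhom (β.nsmul (Nat.card Z) a) = 1 := by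
          rw [Phi_nsmul S T β f hsurj hr hhom hβ hfib]
          exact IH1 _
        have hbk : β.nsmul k (β.nsmul (Nat.card Z) a) = 1 :=
          ker_nsmul_eq_one S f β hβ hfib hr hind x₀
            ((mem_ker_iff S T f hsurj hr hhom _).mp h1)
        apply β.toA_injective
        rw [β.toA_nsmul, hcount, mul_comm (Nat.card Z) k, mul_smul]
        rw [show (Nat.card Z) • β.toA a = β.toA (β.nsmul (Nat.card Z) a) from
          (β.toA_nsmul _ _).symm]
        rw [← β.toA_nsmul k, hbk]
      · -- triviality of the additive Sylow subgroups
        intro q hq a ha b hb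
        have himg : ∀ {c : ↥S.permGroup}, c ∈ β.addSylow q →
            Phi S T f hsurj hr hhom c ∈ βT.addSylow q := by
          rintro c ⟨j, hj⟩
          refine ⟨j, ?_⟩
          rw [← Phi_nsmul S T β f hsurj hr hhom hβ hfib, hj, map_one]
        by_cases hdk : q ∣ k
        · -- the Sylow is contained in the kernel, hence in the socle
          have hqZ : ¬ q ∣ Nat.card Z := by
            intro h
            have : q * q ∣ Nat.card X := by
              rw [hcount]
              exact mul_dvd_mul h hdk
            exact hq.one_lt.ne' (Nat.isUnit_iff.mp (hsq q this))
          have hker : Phi S T f hsurj hr hhom a = 1 := by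
            obtain ⟨j, hj⟩ := himg ha
            have h2 : βT.nsmul (Nat.card Z) (Phi S T f hsurj hr hhom a) = 1 := IH1 _
            have hj' : (q ^ j) • βT.toA (Phi S T f hsurj hr hhom a) = 0 := hj
            have h2' : (Nat.card Z) • βT.toA (Phi S T f hsurj hr hhom a) = 0 := h2
            have hd1 : addOrderOf (βT.toA (Phi S T f hsurj hr hhom a)) ∣ q ^ j :=
              addOrderOf_dvd_of_nsmul_eq_zero hj'
            have hd2 : addOrderOf (βT.toA (Phi S T f hsurj hr hhom a)) ∣ Nat.card Z :=
              addOrderOf_dvd_of_nsmul_eq_zero h2'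
            have hcop : Nat.Coprime (q ^ j) (Nat.card Z) :=
              Nat.Coprime.pow_left j (hq.coprime_iff_not_dvd.mpr hqZ)
            have hdg : addOrderOf (βT.toA (Phi S T f hsurj hr hhom a))
                ∣ Nat.gcd (q ^ j) (Nat.card Z) := Nat.dvd_gcd hd1 hd2
            rw [hcop] at hdg
            have hord : addOrderOf (βT.toA (Phi S T f hsurj hr hhom a)) = 1 :=
              Nat.dvd_one.mp hdg
            have h0 : βT.toA (Phi S T f hsurj hr hhom a) = 0 :=
              AddMonoid.addOrderOf_eq_one_iff.mp hord
            apply βT.toA_injective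
            rw [h0, βT.toA_one]
          exact ker_lam_id S T f hsurj hr hhom β hβ hfib hker b
        · -- the Sylow maps isomorphically to the retract
          have hco : Nat.Coprime q k := hq.coprime_iff_not_dvd.mpr hdk
          set s := β.add (β.lam a b) (β.neg b) with hsdef
          have hsP : s ∈ β.addSylow q := by
            have h1 := (β.addSylow_isAddSubgroup q).2.1 _ (β.lam_mem_addSylow a hb) _
              ((β.addSylow_isAddSubgroup q).2.2 _ hb)
            exact h1
          have hker : Phi S T f hsurj hr hhom s = 1 := by
            rw [hsdef, Phi_add S T β f hsurj hr hhom hβ hfib,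
              Phi_neg S T β f hsurj hr hhom hβ hfib,
              Phi_lam S T β f hsurj hr hhom hβ hfib,
              IH2 q hq _ (himg ha) _ (himg hb)]
            apply βT.toA_injective
            rw [βT.toA_add, βT.toA_neg, βT.toA_one]
            abel
          have hsk : β.nsmul k s = 1 :=
            ker_nsmul_eq_one S f β hβ hfib hr hind x₀
              ((mem_ker_iff S T f hsurj hr hhom _).mp hker)
          obtain ⟨j, hj⟩ := hsP
          have hj' : (q ^ j) • β.toA s = 0 := hj
          have hsk' : k • β.toA s = 0 := hsk
          have hd1 : addOrderOf (β.toA s) ∣ q ^ j := addOrderOf_dvd_of_nsmul_eq_zero hj'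
          have hd2 : addOrderOf (β.toA s) ∣ k := addOrderOf_dvd_of_nsmul_eq_zero hsk'
          have hcop : Nat.Coprime (q ^ j) k := Nat.Coprime.pow_left j hco
          have hord : addOrderOf (β.toA s) = 1 := by
            have hdg : addOrderOf (β.toA s) ∣ Nat.gcd (q ^ j) k := Nat.dvd_gcd hd1 hd2
            rw [hcop] at hdg
            exact Nat.dvd_one.mp hdg
          have hs0 : β.toA s = 0 := AddMonoid.addOrderOf_eq_one_iff.mp hord
          -- s = λ_a b - b = 0
          apply β.toA_injective
          have := hs0
          rw [hsdef, β.toA_add, β.toA_neg] at this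
          have h5 : β.toA (β.lam a b) - β.toA b = 0 := by
            rw [← this]; abel
          have h6 := sub_eq_zero.mp h5
          exact h6

end YBE

/-! ### Auxiliary: coprime splitting and the multiplicative Sylow decomposition -/

lemma squarefree_finset_prod_primes {n : ℕ} (p : Fin n → ℕ) (hp : ∀ i, Nat.Prime (p i))
    (hinj : Function.Injective p) (s : Finset (Fin n)) : Squarefree (∏ i ∈ s, p i) := by
  classical
  induction s using Finset.induction_on with
  | empty => simp only [Finset.prod_empty]; exact squarefree_one
  | @insert a2 s2 ha2 ih2 =>
      rw [Finset.prod_insert ha2]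
      have hcop : Nat.Coprime (p a2) (∏ i ∈ s2, p i) := by
        apply (hp a2).coprime_iff_not_dvd.mpr
        intro hdvd
        obtain ⟨j, hjmem, hdj⟩ := (hp a2).prime.exists_mem_finset_dvd hdvd
        have hje : a2 = j := hinj ((Nat.prime_dvd_prime_iff_eq (hp a2) (hp j)).mp hdj)
        exact ha2 (hje ▸ hjmem)
      exact (Nat.squarefree_mul hcop).mpr ⟨(hp a2).squarefree, ih2⟩

namespace BraceOps

variable {G : Type*} [Group G] (β : BraceOps G)

/-- Coprime splitting of torsion in the additive group. -/
lemma bezout_split {a b : ℕ} (hcop : Nat.Coprime a b) (g : G)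
    (hg : β.nsmul (a * b) g = 1) :
    ∃ u v : G, β.nsmul a u = 1 ∧ β.nsmul b v = 1 ∧ β.toA g = β.toA u + β.toA v := by
  set x := β.toA g with hxdef
  have hx : (a * b) • x = 0 := hg
  have hxz : ((a : ℤ) * b) • x = 0 := by
    have : ((a * b : ℕ) : ℤ) • x = (a * b) • x := natCast_zsmul x (a * b)
    rw [← this] at hx
    rw [← Nat.cast_mul]
    exact hx
  refine ⟨β.ofA (((b : ℤ) * Nat.gcdB a b) • x), β.ofA (((a : ℤ) * Nat.gcdA a b) • x),
    ?_, ?_, ?_⟩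
  · show (a : ℕ) • β.toA (β.ofA (((b : ℤ) * Nat.gcdB a b) • x)) = 0
    rw [β.toA_ofA, ← natCast_zsmul, smul_smul]
    have : (a : ℤ) * ((b : ℤ) * Nat.gcdB a b) = Nat.gcdB a b * ((a : ℤ) * b) := by ring
    rw [this, ← smul_smul, hxz, smul_zero]
  · show (b : ℕ) • β.toA (β.ofA (((a : ℤ) * Nat.gcdA a b) • x)) = 0
    rw [β.toA_ofA, ← natCast_zsmul, smul_smul]
    have : (b : ℤ) * ((a : ℤ) * Nat.gcdA a b) = Nat.gcdA a b * ((a : ℤ) * b) := by ring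
    rw [this, ← smul_smul, hxz, smul_zero]
  · rw [β.toA_ofA, β.toA_ofA, ← add_smul]
    have hbz : (1 : ℤ) = (b : ℤ) * Nat.gcdB a b + (a : ℤ) * Nat.gcdA a b := by
      have h1 := Nat.gcd_eq_gcd_ab a b
      rw [Nat.Coprime] at hcop
      rw [hcop] at h1
      push_cast at h1
      linarith
    rw [← hbz, one_smul]

/-- Multiplicative decomposition along the primary components. -/
lemma decomp {n : ℕ} (p : Fin n → ℕ) (hp : ∀ i, Nat.Prime (p i))
    (hinj : Function.Injective p) :
    ∀ (d j : ℕ), j + d = n → ∀ g : G, β.nsmul ((List.ofFn p).drop j).prod g = 1 →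
    ∃ F : Fin n → G, (∀ i, F i ∈ β.addSylow (p i)) ∧
      g = ((List.ofFn F).drop j).prod := by
  intro d
  induction d with
  | zero =>
      intro j hj g hg
      have hdrop : (List.ofFn p).drop j = [] :=
        List.drop_eq_nil_of_le (by rw [List.length_ofFn]; omega)
      rw [hdrop, List.prod_nil] at hg
      have hg1 : g = 1 := by
        apply β.toA_injective
        have h' : (1 : ℕ) • β.toA g = 0 := hg
        rw [one_smul] at h'
        rw [h', β.toA_one]
      refine ⟨fun _ => 1, fun i => (β.addSylow_isAddSubgroup (p i)).1, ?_⟩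
      rw [hg1]
      symm
      apply List.prod_eq_one
      intro x hx
      have hx' : x ∈ List.ofFn (fun _ : Fin n => (1 : G)) := List.mem_of_mem_drop hx
      obtain ⟨i, rfl⟩ := List.mem_ofFn.mp hx'
      rfl
  | succ d ihd =>
      intro j hj g hg
      have hjn : j < n := by omega
      have hlen : j < (List.ofFn p).length := by rw [List.length_ofFn]; exact hjn
      have hsplit : (List.ofFn p).drop j
          = p ⟨j, hjn⟩ :: (List.ofFn p).drop (j + 1) := by
        rw [List.drop_eq_getElem_cons hlen, List.getElem_ofFn]
      have hgm : β.nsmul (p ⟨j, hjn⟩ * ((List.ofFn p).drop (j + 1)).prod) g = 1 := by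
        rw [← List.prod_cons, ← hsplit]
        exact hg
      have hcop : Nat.Coprime (p ⟨j, hjn⟩) ((List.ofFn p).drop (j + 1)).prod := by
        apply (hp _).coprime_iff_not_dvd.mpr
        intro hdvd
        obtain ⟨x, hxmem, hpx⟩ := ((hp ⟨j, hjn⟩).prime.dvd_prod_iff).mp hdvd
        obtain ⟨idx, hidx, hval⟩ := List.mem_iff_getElem.mp hxmem
        rw [List.getElem_drop, List.getElem_ofFn] at hval
        rw [← hval] at hpx
        have heq : (⟨j, hjn⟩ : Fin n) = ⟨j + 1 + idx, _⟩ :=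
          hinj ((Nat.prime_dvd_prime_iff_eq (hp _) (hp _)).mp hpx)
        have : j = j + 1 + idx := congrArg Fin.val heq
        omega
      obtain ⟨u, v, hu, hv, huv⟩ := β.bezout_split hcop g hgm
      set c := β.lam u⁻¹ v with hcdef
      have hgc : g = u * c := by
        apply β.toA_injective
        rw [β.toA_mul, hcdef, β.lam_lam_inv, huv]
      have hc : β.nsmul ((List.ofFn p).drop (j + 1)).prod c = 1 := by
        apply β.toA_injective
        rw [β.toA_nsmul, β.toA_one]
        have h2 := β.lam_nsmul u⁻¹ (((List.ofFn p).drop (j + 1)).prod) v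
        rw [hv, β.lam_one_right, β.toA_one] at h2
        exact h2.symm
      obtain ⟨F, hF, hFc⟩ := ihd (j + 1) (by omega) c hc
      classical
      refine ⟨fun i => if i = ⟨j, hjn⟩ then u else F i, ?_, ?_⟩
      · intro i
        by_cases hcase : i = ⟨j, hjn⟩
        · subst hcase
          simp only [if_pos rfl]
          exact ⟨1, by rw [pow_one]; exact hu⟩
        · simp only [if_neg hcase]
          exact hF i
      · have hlen' : j < (List.ofFn fun i => if i = ⟨j, hjn⟩ then u else F i).length := by
          rw [List.length_ofFn]; exact hjn
        have hsplit' : (List.ofFn fun i => if i = ⟨j, hjn⟩ then u else F i).drop j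
            = u :: (List.ofFn fun i => if i = ⟨j, hjn⟩ then u else F i).drop (j + 1) := by
          rw [List.drop_eq_getElem_cons hlen', List.getElem_ofFn]
          simp
        have hdropF : (List.ofFn fun i => if i = ⟨j, hjn⟩ then u else F i).drop (j + 1)
            = (List.ofFn F).drop (j + 1) := by
          apply List.ext_getElem
          · simp
          · intro idx h1 h2
            rw [List.getElem_drop, List.getElem_drop, List.getElem_ofFn, List.getElem_ofFn]
            have hne : (⟨j + 1 + idx, by
                have := h2
                rw [List.length_drop, List.length_ofFn] at this
                omega⟩ : Fin n) ≠ ⟨j, hjn⟩ := by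
              intro hcon
              have h3 := congrArg Fin.val hcon
              simp only [] at h3
              omega
            simp only [if_neg hne]
        rw [hsplit', List.prod_cons, hdropF, ← hFc]
        exact hgc

end BraceOps

/-- For an indecomposable multipermutation solution of square-free cardinality:
the only primes dividing `|𝒢(X,r)|` are `p 0, …, p (n-1)`; `𝒢(X,r) = P₁P₂⋯Pₙ` where `P i` is
the Sylow `p i`-subgroup of the additive group of the natural left brace; and each `P i` is an
elementary abelian `p i`-group on which both brace operations coincide (so `P i` is a trivial
brace and a Sylow `p i`-subgroup of the multiplicative group). -/
theorem statement9 {n : ℕ} {X : Type u} (p : Fin n → ℕ)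
    (hp : ∀ i, Nat.Prime (p i)) (hinj : Function.Injective p)
    (S : YBE X) (hcard : Nat.card X = Finset.univ.prod p)
    (hind : S.Indecomposable) (hmp : S.IsMultipermutation)
    (β : BraceOps ↥S.permGroup) (hβ : S.IsNaturalBrace β) :
    (∀ q : ℕ, q.Prime → q ∣ Nat.card ↥S.permGroup → ∃ i, p i = q) ∧
    (∀ g : ↥S.permGroup, ∃ f : Fin n → ↥S.permGroup,
      (∀ i, f i ∈ β.addSylow (p i)) ∧ g = (List.ofFn f).prod) ∧
    ∀ i : Fin n,
      β.IsAddSubgroup (β.addSylow (p i)) ∧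
      (∀ a ∈ β.addSylow (p i), β.nsmul (p i) a = 1) ∧
      (∀ a ∈ β.addSylow (p i), ∀ b ∈ β.addSylow (p i), a * b = β.add a b) ∧
      ∃ Q : Sylow (p i) ↥S.permGroup,
        ((Q : Subgroup ↥S.permGroup) : Set ↥S.permGroup) = β.addSylow (p i) := by
  classical
  have hsq : Squarefree (Nat.card X) := by
    rw [hcard]
    exact squarefree_finset_prod_primes p hp hinj Finset.univ
  obtain ⟨m, hm0, hlev⟩ := hmp
  obtain ⟨C1, C2⟩ := YBE.core m X S β hβ hsq hind hlev
  have hX0 : Nat.card X ≠ 0 := by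
    intro h
    rw [h] at hsq
    exact not_squarefree_zero hsq
  haveI hfinX : Finite X := Nat.finite_of_card_ne_zero hX0
  haveI hfinG : Finite ↥S.permGroup := inferInstance
  haveI hfinA : Finite β.Ad := hfinG
  haveI : Fintype β.Ad := Fintype.ofFinite _
  -- the exponent of the additive group divides `|X|`, in `Ad` language
  have hexp : ∀ x : β.Ad, (Nat.card X) • x = 0 := by
    intro x
    have h1 : (Nat.card X) • β.toA (β.ofA x) = 0 := C1 (β.ofA x)
    rwa [β.toA_ofA] at h1
  -- elementary: each addSylow has exponent p i
  have hbAll : ∀ q : ℕ, Nat.Prime q → ∀ a ∈ β.addSylow q, β.nsmul q a = 1 := by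
    rintro q hq a ⟨j, hj⟩
    have hj' : (q ^ j) • β.toA a = 0 := hj
    have hd1 : addOrderOf (β.toA a) ∣ q ^ j := addOrderOf_dvd_of_nsmul_eq_zero hj'
    have hde : addOrderOf (β.toA a) ∣ Nat.card X :=
      addOrderOf_dvd_of_nsmul_eq_zero (hexp (β.toA a))
    obtain ⟨l, hl, hleq⟩ := (Nat.dvd_prime_pow hq).mp hd1
    have hl1 : l ≤ 1 := by
      by_contra hcon
      push_neg at hcon
      have h2 : q * q ∣ q ^ l := by
        have : q ^ 2 ∣ q ^ l := pow_dvd_pow q hcon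
        rwa [pow_two] at this
      have h3 : q * q ∣ Nat.card X := dvd_trans h2 (hleq ▸ hde)
      exact hq.one_lt.ne' (Nat.isUnit_iff.mp (hsq q h3))
    have hdq : addOrderOf (β.toA a) ∣ q := by
      rw [hleq]
      calc q ^ l ∣ q ^ 1 := pow_dvd_pow q hl1
        _ = q := pow_one q
    show β.nsmul q a = 1
    apply β.toA_injective
    rw [β.toA_nsmul, β.toA_one]
    exact addOrderOf_dvd_iff_nsmul_eq_zero.mp hdq
  -- both operations coincide on each addSylow
  have hcAll : ∀ q : ℕ, Nat.Prime q → ∀ a ∈ β.addSylow q, ∀ b ∈ β.addSylow q,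
      a * b = β.add a b := by
    intro q hq a ha b hb
    apply β.toA_injective
    rw [β.toA_mul, C2 q hq a ha b hb, β.toA_add]
  refine ⟨?_, ?_, ?_⟩
  · -- (1) primes dividing |𝒢(X,r)|
    intro q hq hdvd
    haveI := Fact.mk hq
    have hdvd' : q ∣ Fintype.card β.Ad := by
      rw [← Nat.card_eq_fintype_card]
      exact hdvd
    obtain ⟨x, hx⟩ := exists_prime_addOrderOf_dvd_card q hdvd'
    have hqe : q ∣ Nat.card X := by
      rw [← hx]
      exact addOrderOf_dvd_of_nsmul_eq_zero (hexp x)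
    rw [hcard] at hqe
    obtain ⟨i, _, hdi⟩ := hq.prime.exists_mem_finset_dvd hqe
    exact ⟨i, ((Nat.prime_dvd_prime_iff_eq hq (hp i)).mp hdi).symm⟩
  · -- (2) multiplicative decomposition
    intro g
    have he : β.nsmul ((List.ofFn p).drop 0).prod g = 1 := by
      rw [List.drop_zero, List.prod_ofFn]
      rw [show (∏ i : Fin n, p i) = Nat.card X from hcard.symm]
      exact C1 g
    obtain ⟨F, hF, hFg⟩ := β.decomp p hp hinj n 0 (by omega) g he
    exact ⟨F, hF, by rw [hFg, List.drop_zero]⟩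
  · -- (3) the Sylow structure
    intro i
    set q := p i with hqdef
    have hqp : Nat.Prime q := hp i
    refine ⟨β.addSylow_isAddSubgroup q, hbAll q hqp, hcAll q hqp, ?_⟩
    -- complementary part
    set ew := ∏ j ∈ Finset.univ.erase i, p j with hewdef
    have hqe : q * ew = Nat.card X := by
      rw [hcard]
      exact Finset.mul_prod_erase _ _ (Finset.mem_univ i)
    have hcop : Nat.Coprime q ew := by
      apply hqp.coprime_iff_not_dvd.mpr
      intro hdv
      obtain ⟨j, hjmem, hdj⟩ := hqp.prime.exists_mem_finset_dvd hdv
      have h1 : q = p j := (Nat.prime_dvd_prime_iff_eq hqp (hp j)).mp hdj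
      have h2 : i = j := hinj h1
      exact (Finset.mem_erase.mp hjmem).1 h2.symm
    -- addSylow q = {a | q • a = 0}
    have hSyl_eq : ∀ a : ↥S.permGroup, a ∈ β.addSylow q ↔ q • β.toA a = 0 := by
      intro a
      constructor
      · intro ha
        exact hbAll q hqp a ha
      · intro h
        exact ⟨1, by rw [pow_one]; exact h⟩
    -- the multiplicative subgroup
    let Qsub : Subgroup ↥S.permGroup :=
      { carrier := β.addSylow q
        one_mem' := (β.addSylow_isAddSubgroup q).1
        mul_mem' := by
          intro a b ha hb
          have h1 : a * b = β.add a b := hcAll q hqp a ha b hb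
          rw [h1]
          exact (β.addSylow_isAddSubgroup q).2.1 a ha b hb
        inv_mem' := by
          intro a ha
          have h1 : β.lam a a = a := C2 q hqp a ha a ha
          have h2 : β.toA (a * β.neg a) = 0 := by
            rw [β.toA_mul, β.lam_neg, h1]
            abel
          have h3 : a * β.neg a = 1 := β.toA_injective (by rw [h2, β.toA_one])
          have h4 : a⁻¹ = β.neg a := inv_eq_of_mul_eq_one_right h3
          rw [h4]
          exact (β.addSylow_isAddSubgroup q).2.2 a ha }
    -- the primary pieces as additive subgroups of Ad
    let P' : AddSubgroup β.Ad :=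
      { carrier := {x | q • x = 0}
        zero_mem' := smul_zero q
        add_mem' := by
          intro x y hx hy
          show q • (x + y) = 0
          rw [smul_add, hx, hy, add_zero]
        neg_mem' := by
          intro x hx
          show q • (-x) = 0
          rw [smul_neg, hx, neg_zero] }
    let W' : AddSubgroup β.Ad :=
      { carrier := {x | ew • x = 0}
        zero_mem' := smul_zero ew
        add_mem' := by
          intro x y hx hy
          show ew • (x + y) = 0
          rw [smul_add, hx, hy, add_zero]
        neg_mem' := by
          intro x hx
          show ew • (-x) = 0
          rw [smul_neg, hx, neg_zero] }
    have hordz : ∀ x : β.Ad, q • x = 0 → ew • x = 0 → x = 0 := by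
      intro x h1 h2
      have hdg : addOrderOf x ∣ Nat.gcd q ew :=
        Nat.dvd_gcd (addOrderOf_dvd_of_nsmul_eq_zero h1)
          (addOrderOf_dvd_of_nsmul_eq_zero h2)
      rw [hcop] at hdg
      exact AddMonoid.addOrderOf_eq_one_iff.mp (Nat.dvd_one.mp hdg)
    -- |Ad| = |P'| · |W'|
    have hEquiv : Nat.card β.Ad = Nat.card ↥P' * Nat.card ↥W' := by
      rw [← Nat.card_prod]
      symm
      apply Nat.card_congr
      refine Equiv.ofBijective (fun z => (z.1 : β.Ad) + (z.2 : β.Ad)) ⟨?_, ?_⟩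
      · rintro ⟨⟨x1, hx1⟩, ⟨y1, hy1⟩⟩ ⟨⟨x2, hx2⟩, ⟨y2, hy2⟩⟩ h
        simp only [] at h
        have h12 : x1 - x2 = y2 - y1 := by
          have h' : (x1 + y1) - (x2 + y2) = 0 := by rw [h, sub_self]
          have hcalc : (x1 - x2) - (y2 - y1) = (x1 + y1) - (x2 + y2) := by abel
          have := hcalc.trans h'
          exact sub_eq_zero.mp this
        have hq0 : q • (x1 - x2) = 0 := by
          rw [smul_sub, hx1, hx2, sub_zero]
        have hew0 : ew • (x1 - x2) = 0 := by
          rw [h12, smul_sub, hy2, hy1, sub_zero]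
        have hx12 : x1 = x2 := sub_eq_zero.mp (hordz _ hq0 hew0)
        have hy12 : y1 = y2 := by
          subst hx12
          exact add_left_cancel h
        subst hx12; subst hy12
        rfl
      · intro x
        have hg : β.nsmul (q * ew) (β.ofA x) = 1 := by
          rw [hqe]
          exact C1 (β.ofA x)
        obtain ⟨u, v, hu, hv, huv⟩ := β.bezout_split hcop (β.ofA x) hg
        have hu' : q • β.toA u = 0 := hbAll q hqp u ⟨1, by rw [pow_one]; exact hu⟩
        have hv' : ew • β.toA v = 0 := hv
        refine ⟨⟨⟨β.toA u, hu'⟩, ⟨β.toA v, hv'⟩⟩, ?_⟩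
        show β.toA u + β.toA v = x
        rw [← huv, β.toA_ofA]
    -- q does not divide |W'|
    have hW0 : Nat.card ↥W' ≠ 0 := Nat.card_pos.ne'
    have hWq : ¬ q ∣ Nat.card ↥W' := by
      intro hdvd
      letI instW : Fintype ↥W' := Fintype.ofFinite _
      obtain ⟨y, hy⟩ := @exists_prime_addOrderOf_dvd_card ↥W' _ instW q (Fact.mk hqp)
        (by rw [← Nat.card_eq_fintype_card]; exact hdvd)
      have hyv : addOrderOf (y : β.Ad) = q := by
        rw [AddSubgroup.addOrderOf_coe]
        exact hy
      have hyw : ew • (y : β.Ad) = 0 := y.2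
      have hqw : q ∣ ew := by
        rw [← hyv]
        exact addOrderOf_dvd_of_nsmul_eq_zero hyw
      have h1 : q ∣ 1 := by
        rw [← hcop]
        exact Nat.dvd_gcd dvd_rfl hqw
      exact hqp.one_lt.ne' (Nat.dvd_one.mp h1)
    -- |P'| is a power of q
    have hP0 : Nat.card ↥P' ≠ 0 := Nat.card_pos.ne'
    have hPpow : Nat.card ↥P' = q ^ (Nat.card ↥P').primeFactorsList.length := by
      apply Nat.eq_prime_pow_of_unique_prime_dvd hP0
      intro r hr hdvd
      letI instP : Fintype ↥P' := Fintype.ofFinite _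
      obtain ⟨y, hy⟩ := @exists_prime_addOrderOf_dvd_card ↥P' _ instP r (Fact.mk hr)
        (by rw [← Nat.card_eq_fintype_card]; exact hdvd)
      have hyv : addOrderOf (y : β.Ad) = r := by
        rw [AddSubgroup.addOrderOf_coe]
        exact hy
      have hyq : q • (y : β.Ad) = 0 := y.2
      have hrq : r ∣ q := by
        rw [← hyv]
        exact addOrderOf_dvd_of_nsmul_eq_zero hyq
      exact (Nat.prime_dvd_prime_iff_eq hr hqp).mp hrq
    set L := (Nat.card ↥P').primeFactorsList.length with hLdef
    have hcardG : Nat.card ↥S.permGroup = q ^ L * Nat.card ↥W' := by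
      rw [show Nat.card ↥S.permGroup = Nat.card β.Ad from rfl, hEquiv, ← hPpow]
    have hfact : (Nat.card ↥S.permGroup).factorization q = L := by
      rw [hcardG, Nat.factorization_mul (pow_ne_zero L hqp.ne_zero) hW0]
      rw [Finsupp.add_apply, hqp.factorization_pow,
        Nat.factorization_eq_zero_of_not_dvd hWq, add_zero, Finsupp.single_eq_same]
    have hQP : Nat.card ↥Qsub = Nat.card ↥P' := by
      apply Nat.card_congr
      refine ⟨fun a => ⟨β.toA a.1, (hSyl_eq a.1).mp a.2⟩,
        fun x => ⟨β.ofA x.1, (hSyl_eq (β.ofA x.1)).mpr (by rw [β.toA_ofA]; exact x.2)⟩,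
        ?_, ?_⟩
      · intro a
        rfl
      · intro x
        rfl
    haveI := Fact.mk hqp
    refine ⟨Sylow.ofCard Qsub (by rw [hQP, hPpow, hfact]), ?_⟩
    rfl
end

section
/- Let (Y, s) be an involutive non-degenerate set-theoretic solution of the Yang–Baxter equation given by bijections σ_x (x ∈ Y), and let p be a prime. Set X = ℤ/(p) × Y and define, for (a,x), (b,y) ∈ X, σ'_{(a,x)}(b,y) = (b + δ_{x,σ_x(y)}, σ_x(y)), where δ_{u,v} ∈ ℤ/(p) equals 1 if u = v and 0 otherwise. Then each σ'_{(a,x)} is a bijection of X and the map r'((a,x),(b,y)) = (σ'_{(a,x)}(b,y), (σ'_{σ'_{(a,x)}(b,y)})⁻¹(a,x)) is an involutive non-degenerate set-theoretic solution of the Yang–Baxter equation on X; equivalently, σ'_{(a,x)} ∘ σ'_{(σ'_{(a,x)})⁻¹(b,y)} = σ'_{(b,y)} ∘ σ'_{(σ'_{(b,y)})⁻¹(a,x)} for all (a,x), (b,y) ∈ X. -/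
open Equiv Pointwise

universe u v

section Statement12Aux

variable {Y : Type v}

lemma kdelta_inj (q : ℕ) {α β : Type*} {f : α → β} (hf : Function.Injective f)
    (u w : α) : kdelta q (f u) (f w) = kdelta q u w := by
  unfold kdelta
  by_cases h : u = w
  · simp [h]
  · rw [if_neg h, if_neg (fun he => h (hf he))]

noncomputable def extEquiv (T : YBE Y) (q : ℕ) (x : Y) : Equiv.Perm (ZMod q × Y) where
  toFun b := (b.1 + kdelta q x (T.σ x b.2), T.σ x b.2)
  invFun c := (c.1 - kdelta q x c.2, (T.σ x).symm c.2)
  left_inv b := by simp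
  right_inv c := by simp

lemma extEquiv_apply (T : YBE Y) (q : ℕ) (x : Y) (b : ZMod q × Y) :
    extEquiv T q x b = (b.1 + kdelta q x (T.σ x b.2), T.σ x b.2) := rfl

lemma extEquiv_inv_apply (T : YBE Y) (q : ℕ) (x : Y) (c : ZMod q × Y) :
    (extEquiv T q x)⁻¹ c = (c.1 - kdelta q x c.2, (T.σ x)⁻¹ c.2) := rfl

end Statement12Aux

/-- Given a solution `(Y,s)` and a prime `q`, the maps
`σ'_{(a,x)}(b,y) = (b + δ_{x,σ_x(y)}, σ_x(y))` on `ℤ/(q) × Y` are bijections and define an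
involutive non-degenerate set-theoretic solution of the YBE on `ℤ/(q) × Y`. -/
theorem statement12 {Y : Type v} (T : YBE Y) (q : ℕ) (hq : q.Prime) :
    (∀ a : ZMod q × Y, Function.Bijective (extMap T q a)) ∧
    ∃ S : YBE (ZMod q × Y), ∀ a b : ZMod q × Y, S.σ a b = extMap T q a b := by
  refine ⟨fun a => (extEquiv T q a.2).bijective, ⟨⟨fun a => extEquiv T q a.2, ?_⟩, fun a b => rfl⟩⟩
  intro a b
  apply Equiv.ext
  intro c
  set x := a.2
  set y := b.2
  have hub : ((extEquiv T q x)⁻¹ b).2 = (T.σ x)⁻¹ y := rfl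
  have hvb : ((extEquiv T q y)⁻¹ a).2 = (T.σ y)⁻¹ x := rfl
  simp only [Equiv.Perm.mul_apply, hub, hvb]
  set u := (T.σ x)⁻¹ y with hu
  set v := (T.σ y)⁻¹ x with hv
  have hY := T.ybe x y
  have hw : T.σ x (T.σ u c.2) = T.σ y (T.σ v c.2) := by
    have := congrArg (fun e : Equiv.Perm Y => e c.2) hY
    exact this
  have hxu : T.σ x u = y := by simp [hu]
  have hyv : T.σ y v = x := by simp [hv]
  have h1 : kdelta q u (T.σ u c.2) = kdelta q y (T.σ x (T.σ u c.2)) := by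
    rw [← kdelta_inj q (T.σ x).injective u (T.σ u c.2), hxu]
  have h2 : kdelta q v (T.σ v c.2) = kdelta q x (T.σ y (T.σ v c.2)) := by
    rw [← kdelta_inj q (T.σ y).injective v (T.σ v c.2), hyv]
  simp only [extEquiv_apply]
  rw [h1, h2, hw]
  exact Prod.ext (by ring) rfl
end

section
/- Let (Y, s) be an involutive non-degenerate set-theoretic solution of the Yang–Baxter equation given by bijections σ_x (x ∈ Y), let p be a prime, and let (X, r') be the solution on X = ℤ/(p) × Y with σ'_{(a,x)}(b,y) = (b + δ_{x,σ_x(y)}, σ_x(y)). Then σ'_{(a,x)} = σ'_{(b,y)} if and only if x = y, and the map sending the retract class of (a,x) to x is an isomorphism of solutions Ret(X, r') ≅ (Y, s). -/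
open Equiv Pointwise

universe u v

/-- For the extension solution on `ℤ/(q) × Y` built from a solution `(Y,s)`:
`σ'_{(a,x)} = σ'_{(b,y)}` iff `x = y`, and the second projection realizes an isomorphism of
solutions `Ret(ℤ/(q) × Y, r') ≅ (Y,s)` (it is a surjective homomorphism of solutions whose
fibers are exactly the retract classes). -/
theorem statement13 {Y : Type v} (T : YBE Y) (q : ℕ) (hq : q.Prime)
    (S : YBE (ZMod q × Y)) (hS : ∀ a b : ZMod q × Y, S.σ a b = extMap T q a b) :
    (∀ a b : ZMod q × Y, S.σ a = S.σ b ↔ a.2 = b.2) ∧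
    Function.Surjective (Prod.snd : ZMod q × Y → Y) ∧
    S.IsHom T Prod.snd ∧
    ∀ a b : ZMod q × Y, Prod.snd a = Prod.snd b ↔ S.σ a = S.σ b := by
  have key : ∀ a b : ZMod q × Y, S.σ a = S.σ b ↔ a.2 = b.2 := by
    intro a b
    constructor
    · intro h
      have hσ : ∀ y : Y, T.σ a.2 y = T.σ b.2 y := by
        intro y
        have := congrArg (fun f : Equiv.Perm (ZMod q × Y) => (f (0, y)).2) h
        simpa [hS, extMap] using this
      have h2 : ∀ y : Y, kdelta q a.2 (T.σ a.2 y) = kdelta q b.2 (T.σ b.2 y) := by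
        intro y
        have := congrArg (fun f : Equiv.Perm (ZMod q × Y) => (f (0, y)).1) h
        simpa [hS, extMap] using this
      have hd := h2 ((T.σ a.2)⁻¹ a.2)
      have hinv : T.σ a.2 ((T.σ a.2)⁻¹ a.2) = a.2 := (T.σ a.2).apply_symm_apply a.2
      rw [hinv, ← hσ, hinv] at hd
      by_contra hne
      haveI : Fact q.Prime := ⟨hq⟩
      have hba : b.2 ≠ a.2 := fun e => hne e.symm
      unfold kdelta at hd
      rw [if_pos rfl, if_neg hba] at hd
      exact one_ne_zero hd
    · intro h
      ext c <;> simp [hS, extMap, h]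
  refine ⟨key, ?_, ?_, fun a b => (key a b).symm⟩
  · intro y; exact ⟨(0, y), rfl⟩
  · intro a b; simp [hS, extMap, YBE.IsHom]
end

section
/- For every positive integer n and every choice of n distinct prime numbers p_1, …, p_n, there exists an indecomposable involutive non-degenerate set-theoretic solution (X, r) of the Yang–Baxter equation with |X| = p_1⋯p_n which is a multipermutation solution of multipermutation level exactly n, and such that |𝒢(X,r)| = p_1 · p_2^{p_1} · p_3^{p_1p_2} ⋯ p_n^{p_1⋯p_{n−1}}. -/
open Equiv Pointwise

universe u v

namespace S14

lemma perm_apply_inv_self {α : Type*} (e : Equiv.Perm α) (x : α) : e (e⁻¹ x) = x :=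
  e.apply_symm_apply x

lemma perm_inv_apply_self {α : Type*} (e : Equiv.Perm α) (x : α) : e⁻¹ (e x) = x :=
  e.symm_apply_apply x

lemma kdelta_self (q : ℕ) {α : Type*} (u : α) : kdelta q u u = 1 := by
  simp [kdelta]

lemma kdelta_ne (q : ℕ) {α : Type*} {u w : α} (h : u ≠ w) : kdelta q u w = 0 := by
  simp [kdelta, h]

lemma kdelta_inj (q : ℕ) {α β : Type*} {g : α → β} (hg : Function.Injective g)
    (u w : α) : kdelta q (g u) (g w) = kdelta q u w := by
  by_cases h : u = w
  · subst h; simp [kdelta]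
  · rw [kdelta_ne q h, kdelta_ne q (fun hh => h (hg hh))]

/-- The twisted permutation `(b, y) ↦ (b + f y, g y)` of `ZMod q × Y`. -/
def twE (q : ℕ) {Y : Type} (f : Y → ZMod q) (g : Equiv.Perm Y) :
    Equiv.Perm (ZMod q × Y) where
  toFun v := (v.1 + f v.2, g v.2)
  invFun v := (v.1 - f (g⁻¹ v.2), g⁻¹ v.2)
  left_inv := by rintro ⟨b, y⟩; simp
  right_inv := by rintro ⟨b, y⟩; simp

@[simp] lemma twE_apply (q : ℕ) {Y : Type} (f : Y → ZMod q) (g : Equiv.Perm Y)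
    (v : ZMod q × Y) : twE q f g v = (v.1 + f v.2, g v.2) := rfl

@[simp] lemma twE_inv_apply (q : ℕ) {Y : Type} (f : Y → ZMod q) (g : Equiv.Perm Y)
    (v : ZMod q × Y) : (twE q f g)⁻¹ v = (v.1 - f (g⁻¹ v.2), g⁻¹ v.2) := rfl

lemma twE_mul (q : ℕ) {Y : Type} (f f' : Y → ZMod q) (g g' : Equiv.Perm Y) :
    twE q f g * twE q f' g' = twE q (fun y => f' y + f (g' y)) (g * g') := by
  ext v <;> simp [twE, Equiv.Perm.mul_apply, add_assoc]

lemma twE_inv (q : ℕ) {Y : Type} (f : Y → ZMod q) (g : Equiv.Perm Y) :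
    (twE q f g)⁻¹ = twE q (fun y => -f (g⁻¹ y)) g⁻¹ := by
  ext v <;> simp [twE_inv_apply, twE_apply, sub_eq_add_neg]

lemma twE_one (q : ℕ) {Y : Type} : twE q (fun _ => (0 : ZMod q)) (1 : Equiv.Perm Y) = 1 := by
  ext v <;> simp [twE]

lemma twE_eq_iff (q : ℕ) {Y : Type} {f f' : Y → ZMod q} {g g' : Equiv.Perm Y} :
    twE q f g = twE q f' g' ↔ f = f' ∧ g = g' := by
  constructor
  · intro h
    have h2 : ∀ y : Y, (twE q f g) (0, y) = (twE q f' g') (0, y) := fun y => by rw [h]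
    simp only [twE_apply, Prod.mk.injEq, zero_add] at h2
    exact ⟨funext fun y => (h2 y).1, Equiv.ext fun y => (h2 y).2⟩
  · rintro ⟨rfl, rfl⟩; rfl

lemma twE_pow (q : ℕ) {Y : Type} (f : Y → ZMod q) (g : Equiv.Perm Y) (k : ℕ) :
    (twE q f g) ^ k = twE q (fun y => ∑ j ∈ Finset.range k, f ((g ^ j) y)) (g ^ k) := by
  induction k with
  | zero => simp [twE_one]
  | succ k ih =>
      rw [pow_succ, ih, twE_mul, ← pow_succ]
      congr 1
      funext y
      have hpt : ∀ j : ℕ, (g ^ j) (g y) = (g ^ (j + 1)) y := fun j => by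
        rw [pow_succ, Equiv.Perm.mul_apply]
      rw [Finset.sum_range_succ' (fun j => f ((g ^ j) y)) k]
      simp only [hpt, pow_zero, Equiv.Perm.one_apply]
      exact add_comm _ _


/-- The tower of solutions. -/
def XT : List ℕ → Type
  | [] => PUnit
  | q :: l => ZMod q × XT l

instance : ∀ l : List ℕ, Nonempty (XT l)
  | [] => ⟨PUnit.unit⟩
  | q :: l => by
      have := instNonemptyXT l
      exact ⟨(0, Classical.arbitrary (XT l))⟩

/-- The extension of a solution by `ZMod q`. -/
noncomputable def extYBE (q : ℕ) {Y : Type} (T : YBE Y) : YBE (ZMod q × Y) where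
  σ u := twE q (fun y => kdelta q u.2 (T.σ u.2 y)) (T.σ u.2)
  ybe := by
    intro u v
    have hsnd : ((twE q (fun y => kdelta q u.2 (T.σ u.2 y)) (T.σ u.2))⁻¹ v).2
        = (T.σ u.2)⁻¹ v.2 := rfl
    have hsnd' : ((twE q (fun y => kdelta q v.2 (T.σ v.2 y)) (T.σ v.2))⁻¹ u).2
        = (T.σ v.2)⁻¹ u.2 := rfl
    rw [hsnd, hsnd', twE_mul, twE_mul]
    set x := u.2
    set y := v.2
    set w := (T.σ x)⁻¹ y with hw
    set w' := (T.σ y)⁻¹ x with hw'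
    have hybe := T.ybe x y
    have hρ : ∀ z : Y, T.σ x (T.σ w z) = T.σ y (T.σ w' z) := by
      intro z
      have := congrArg (fun s => s z) hybe
      exact this
    have hf : (fun z => kdelta q w (T.σ w z) + kdelta q x (T.σ x (T.σ w z)))
        = (fun z => kdelta q w' (T.σ w' z) + kdelta q y (T.σ y (T.σ w' z))) := by
      funext z
      have h1 : kdelta q w (T.σ w z) = kdelta q y (T.σ x (T.σ w z)) := by
        rw [← kdelta_inj q (T.σ x).injective w (T.σ w z)]
        congr 1
        rw [hw, perm_apply_inv_self]
      have h2 : kdelta q w' (T.σ w' z) = kdelta q x (T.σ y (T.σ w' z)) := by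
        rw [← kdelta_inj q (T.σ y).injective w' (T.σ w' z)]
        congr 1
        rw [hw', perm_apply_inv_self]
      rw [h1, h2, hρ z, add_comm]
    rw [hf, hybe]

/-- The solution tower: iterated extensions of the trivial solution on a point. -/
noncomputable def SoT : (l : List ℕ) → YBE (XT l)
  | [] => ⟨fun _ => 1, fun _ _ => rfl⟩
  | q :: l => extYBE q (SoT l)

lemma SoT_cons_σ (q : ℕ) (l : List ℕ) (u : ZMod q × XT l) :
    (SoT (q :: l)).σ u
      = twE q (fun y => kdelta q u.2 ((SoT l).σ u.2 y)) ((SoT l).σ u.2) := rfl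

lemma finiteXT : ∀ l : List ℕ, (∀ a ∈ l, a ≠ 0) → Finite (XT l)
  | [], _ => inferInstanceAs (Finite PUnit.{1})
  | q :: l, h => by
      have : NeZero q := ⟨h q (List.mem_cons_self (a := q) (l := l))⟩
      have := finiteXT l (fun a ha => h a (List.mem_cons_of_mem q ha))
      exact inferInstanceAs (Finite (ZMod q × XT l))

lemma cardXT : ∀ l : List ℕ, (∀ a ∈ l, a ≠ 0) → Nat.card (XT l) = l.prod
  | [], _ => by
      show Nat.card PUnit.{1} = 1
      simp
  | q :: l, h => by
      have : NeZero q := ⟨h q (List.mem_cons_self (a := q) (l := l))⟩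
      have ih := cardXT l (fun a ha => h a (List.mem_cons_of_mem q ha))
      show Nat.card (ZMod q × XT l) = _
      rw [Nat.card_prod, Nat.card_zmod, ih, List.prod_cons]

section Cyc

variable {α : Type} [Finite α]

lemma cyc_bij (σ : Equiv.Perm α) (h : ∀ v w : α, ∃ k : ℕ, (σ ^ k) v = w) (v₀ : α) :
    Function.Bijective (fun j : Fin (orderOf σ) => (σ ^ (j : ℕ)) v₀) := by
  constructor
  · have key : ∀ i j : Fin (orderOf σ), (i : ℕ) ≤ (j : ℕ) →
        (σ ^ (i : ℕ)) v₀ = (σ ^ (j : ℕ)) v₀ → i = j := by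
      intro i j hle hij
      have hfix : (σ ^ ((j : ℕ) - (i : ℕ))) ((σ ^ (i : ℕ)) v₀) = (σ ^ (i : ℕ)) v₀ := by
        rw [← Equiv.Perm.mul_apply, ← pow_add, Nat.sub_add_cancel hle, hij]
      have hall : σ ^ ((j : ℕ) - (i : ℕ)) = 1 := by
        ext w
        obtain ⟨k, hk⟩ := h ((σ ^ (i : ℕ)) v₀) w
        rw [Equiv.Perm.one_apply, ← hk, ← Equiv.Perm.mul_apply, ← pow_add, add_comm,
          pow_add, Equiv.Perm.mul_apply, hfix]
      have hdvd := orderOf_dvd_of_pow_eq_one hall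
      have hj2 : (j : ℕ) - (i : ℕ) = 0 := by
        by_contra hne
        have := Nat.le_of_dvd (Nat.pos_of_ne_zero hne) hdvd
        have := i.2
        have := j.2
        omega
      exact Fin.ext (by omega)
    intro i j hij
    dsimp at hij
    rcases le_total (i : ℕ) (j : ℕ) with h' | h'
    · exact key i j h' hij
    · exact (key j i h' hij.symm).symm
  · intro w
    obtain ⟨k, hk⟩ := h v₀ w
    have hpos : 0 < orderOf σ := orderOf_pos σ
    refine ⟨⟨k % orderOf σ, Nat.mod_lt _ hpos⟩, ?_⟩
    dsimp
    rw [pow_mod_orderOf, hk]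

lemma cyc_order (σ : Equiv.Perm α) (h : ∀ v w : α, ∃ k : ℕ, (σ ^ k) v = w)
    [Nonempty α] : orderOf σ = Nat.card α := by
  have hb := cyc_bij σ h (Classical.arbitrary α)
  have := Nat.card_eq_of_bijective _ hb
  simpa using this

lemma cyc_pow_card (σ : Equiv.Perm α) (h : ∀ v w : α, ∃ k : ℕ, (σ ^ k) v = w)
    [Nonempty α] : σ ^ (Nat.card α) = 1 := by
  rw [← cyc_order σ h, pow_orderOf_eq_one]

lemma cyc_unique (σ : Equiv.Perm α) (h : ∀ v w : α, ∃ k : ℕ, (σ ^ k) v = w)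
    [Nonempty α] (y x : α) :
    ∃ j : ℕ, j < Nat.card α ∧ (σ ^ j) y = x ∧
      ∀ j' : ℕ, j' < Nat.card α → (σ ^ j') y = x → j' = j := by
  have hb := cyc_bij σ h y
  rw [cyc_order σ h] at hb
  obtain ⟨⟨j, hj⟩, hjx⟩ := hb.2 x
  dsimp at hjx
  refine ⟨j, hj, hjx, ?_⟩
  intro j' hj' hjx'
  have heq : (⟨j', hj'⟩ : Fin (Nat.card α)) = ⟨j, hj⟩ := hb.1 (by dsimp; rw [hjx', hjx])
  exact congrArg Fin.val heq

end Cyc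

/-- counting the delta hits over a full cycle -/
lemma sum_kdelta_cycle (q : ℕ) {α : Type} [Finite α] [Nonempty α]
    (σ : Equiv.Perm α) (h : ∀ v w : α, ∃ k : ℕ, (σ ^ k) v = w) (x y : α) :
    ∑ j ∈ Finset.range (Nat.card α), kdelta q x ((σ ^ (j + 1)) y) = 1 := by
  obtain ⟨j₀, hj₀lt, hj₀, huniq⟩ := cyc_unique σ h (σ y) x
  have key : ∀ j : ℕ, (σ ^ (j + 1)) y = (σ ^ j) (σ y) := by
    intro j; rw [pow_succ, Equiv.Perm.mul_apply]
  rw [Finset.sum_eq_single_of_mem j₀ (Finset.mem_range.2 hj₀lt)]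
  · rw [key, hj₀, kdelta_self]
  · intro b hb hbne
    rw [key]
    exact kdelta_ne q (fun hx => hbne (huniq b (Finset.mem_range.1 hb) (hx ▸ rfl)))

/-- basic facts about the σ's of an extension -/
lemma extσ (q : ℕ) {Y : Type} (T : YBE Y) (u : ZMod q × Y) :
    (extYBE q T).σ u = twE q (fun y => kdelta q u.2 (T.σ u.2 y)) (T.σ u.2) := rfl

lemma ext_pow (q : ℕ) {Y : Type} (T : YBE Y) (u : ZMod q × Y) (k : ℕ) :
    ((extYBE q T).σ u) ^ k
      = twE q (fun y => ∑ j ∈ Finset.range k, kdelta q u.2 ((T.σ u.2 ^ (j + 1)) y))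
          (T.σ u.2 ^ k) := by
  rw [extσ, twE_pow]
  congr 1
  funext y'
  apply Finset.sum_congr rfl
  intro j _
  congr 1
  rw [← Equiv.Perm.mul_apply, ← pow_succ', pow_succ, Equiv.Perm.mul_apply]

/-- transitivity of each σ in an extension -/
lemma trans_ext (q : ℕ) [NeZero q] {Y : Type} [Finite Y] [Nonempty Y] (T : YBE Y)
    (ih : ∀ u v w : Y, ∃ k : ℕ, ((T.σ u) ^ k) v = w) :
    ∀ u v w : ZMod q × Y, ∃ k : ℕ, (((extYBE q T).σ u) ^ k) v = w := by
  rintro ⟨a, x⟩ ⟨b, y⟩ ⟨c, z⟩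
  set σ := T.σ x with hσ
  have htr : ∀ v w : Y, ∃ k : ℕ, (σ ^ k) v = w := fun v w => ih x v w
  set m := Nat.card Y with hm
  have hmone : σ ^ m = 1 := cyc_pow_card σ htr
  have hσm : ((extYBE q T).σ (a, x)) ^ m = twE q (fun _ => (1 : ZMod q)) 1 := by
    rw [ext_pow, hmone]
    congr 1
    funext y'
    exact sum_kdelta_cycle q σ htr x y'
  obtain ⟨s, hs⟩ := htr y z
  set b' : ZMod q := b + ∑ j ∈ Finset.range s, kdelta q x ((σ ^ (j + 1)) y) with hb'
  refine ⟨m * (c - b').val + s, ?_⟩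
  rw [pow_add, pow_mul, hσm, ext_pow, Equiv.Perm.mul_apply, twE_pow]
  simp only [twE_apply, one_pow, Finset.sum_const, Finset.card_range, nsmul_eq_mul,
    mul_one, Equiv.Perm.one_apply]
  rw [Prod.mk.injEq]
  constructor
  · rw [ZMod.natCast_val, ZMod.cast_id, hb']
    ring
  · exact hs

lemma transSoT : ∀ l : List ℕ, (∀ a ∈ l, a.Prime) →
    ∀ u v w : XT l, ∃ k : ℕ, (((SoT l).σ u) ^ k) v = w
  | [], _ => fun _ v w => by
      haveI : Subsingleton (XT []) := inferInstanceAs (Subsingleton PUnit.{1})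
      exact ⟨0, Subsingleton.elim _ _⟩
  | q :: l, hp => by
      have hq : q.Prime := hp q (List.mem_cons_self (a := q) (l := l))
      haveI : NeZero q := ⟨hq.ne_zero⟩
      have hl := fun a ha => hp a (List.mem_cons_of_mem q ha)
      haveI : Finite (XT l) := finiteXT l (fun a ha => (hl a ha).ne_zero)
      exact trans_ext q (SoT l) (transSoT l hl)


/-! ### The explicit form of the permutation group of an extension -/

/-- The subgroup `(ZMod q)^Y ⋊ G` of `Perm (ZMod q × Y)`. -/
def ESub (q : ℕ) {Y : Type} (G : Subgroup (Equiv.Perm Y)) :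
    Subgroup (Equiv.Perm (ZMod q × Y)) where
  carrier := {π | ∃ f : Y → ZMod q, ∃ g : Equiv.Perm Y, g ∈ G ∧ π = twE q f g}
  one_mem' := ⟨fun _ => 0, 1, G.one_mem, (twE_one q).symm⟩
  mul_mem' := by
    rintro π π' ⟨f, g, hg, rfl⟩ ⟨f', g', hg', rfl⟩
    exact ⟨_, _, G.mul_mem hg hg', twE_mul q f f' g g'⟩
  inv_mem' := by
    rintro π ⟨f, g, hg, rfl⟩
    exact ⟨_, _, G.inv_mem hg, twE_inv q f g⟩

lemma mem_ESub {q : ℕ} {Y : Type} {G : Subgroup (Equiv.Perm Y)} {π : Equiv.Perm (ZMod q × Y)} :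
    π ∈ ESub q G ↔ ∃ f : Y → ZMod q, ∃ g : Equiv.Perm Y, g ∈ G ∧ π = twE q f g := Iff.rfl

lemma gen_mem_permGroup {Y : Type} (T : YBE Y) (u : Y) : T.σ u ∈ T.permGroup :=
  Subgroup.subset_closure (Set.mem_range_self u)

lemma permGroup_ext_le (q : ℕ) {Y : Type} (T : YBE Y) :
    (extYBE q T).permGroup ≤ ESub q T.permGroup := by
  apply (Subgroup.closure_le _).2
  rintro π ⟨u, rfl⟩
  exact ⟨fun y => kdelta q u.2 (T.σ u.2 y), T.σ u.2, gen_mem_permGroup T u.2, extσ q T u⟩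

lemma lift_mem (q : ℕ) {Y : Type} (T : YBE Y) :
    ∀ g ∈ T.permGroup, ∃ f : Y → ZMod q, twE q f g ∈ (extYBE q T).permGroup := by
  intro g hg
  refine Subgroup.closure_induction ?_ ?_ ?_ ?_ hg
  · rintro π ⟨x, rfl⟩
    exact ⟨fun y => kdelta q x (T.σ x y),
      Subgroup.subset_closure ⟨((0 : ZMod q), x), rfl⟩⟩
  · exact ⟨fun _ => 0, by rw [twE_one]; exact Subgroup.one_mem _⟩
  · rintro g g' _ _ ⟨f, hf⟩ ⟨f', hf'⟩
    exact ⟨_, by rw [← twE_mul]; exact Subgroup.mul_mem _ hf hf'⟩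
  · rintro g _ ⟨f, hf⟩
    exact ⟨_, by rw [← twE_inv]; exact Subgroup.inv_mem _ hf⟩

/-- The "translation" part of a subgroup `W ≤ Perm (ZMod q × Y)`, as an additive
subgroup of `Y → ZMod q`. -/
def Ksub (q : ℕ) {Y : Type} (W : Subgroup (Equiv.Perm (ZMod q × Y))) :
    AddSubgroup (Y → ZMod q) where
  carrier := {f | twE q f 1 ∈ W}
  zero_mem' := by
    show twE q (fun _ => 0) 1 ∈ W
    rw [twE_one]; exact W.one_mem
  add_mem' := by
    intro f f' hf hf'
    show twE q (f + f') 1 ∈ W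
    have h2 : twE q (f + f') 1 = twE q f 1 * twE q f' 1 := by
      rw [twE_mul, twE_eq_iff]
      refine ⟨funext fun y => ?_, (one_mul 1).symm⟩
      show f y + f' y = f' y + f ((1 : Equiv.Perm Y) y)
      rw [Equiv.Perm.one_apply, add_comm]
    rw [h2]; exact W.mul_mem hf hf'
  neg_mem' := by
    intro f hf
    show twE q (-f) 1 ∈ W
    have h2 : twE q (-f) 1 = (twE q f 1)⁻¹ := by
      rw [twE_inv, twE_eq_iff]
      refine ⟨funext fun y => ?_, inv_one.symm⟩
      show -f y = -f ((1 : Equiv.Perm Y)⁻¹ y)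
      rw [inv_one, Equiv.Perm.one_apply]
    rw [h2]; exact W.inv_mem hf

lemma mem_Ksub {q : ℕ} {Y : Type} {W : Subgroup (Equiv.Perm (ZMod q × Y))}
    {f : Y → ZMod q} : f ∈ Ksub q W ↔ twE q f 1 ∈ W := Iff.rfl

/-- The fiberwise sum map. -/
def fibS (q q' : ℕ) [NeZero q'] {Y' : Type} (f : ZMod q' × Y' → ZMod q) :
    Y' → ZMod q := fun x => ∑ b : ZMod q', f (b, x)

lemma fibS_twE (q q' : ℕ) [NeZero q'] {Y' : Type} (f : ZMod q' × Y' → ZMod q)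
    (t : Y' → ZMod q') (g₂ : Equiv.Perm Y') :
    fibS q q' (fun y => f (twE q' t g₂ y)) = fun z => fibS q q' f (g₂ z) := by
  funext z
  show ∑ b : ZMod q', f (b + t z, g₂ z) = ∑ b : ZMod q', f (b, g₂ z)
  exact Equiv.sum_comp (Equiv.addRight (t z)) (fun b => f (b, g₂ z))

/-- The base case of the structure theorem: extension of a solution on a singleton. -/
lemma fullNil (q : ℕ) [NeZero q] {Y : Type} [Subsingleton Y] [Nonempty Y] (T : YBE Y) :
    (extYBE q T).permGroup = ESub q T.permGroup := by
  apply le_antisymm (permGroup_ext_le q T)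
  rintro π ⟨f, g, hg, rfl⟩
  haveI : Subsingleton (Equiv.Perm Y) := ⟨fun a b => Equiv.ext fun y => Subsingleton.elim _ _⟩
  obtain ⟨y₀⟩ := ‹Nonempty Y›
  have hgen : (extYBE q T).σ (0, y₀) ∈ (extYBE q T).permGroup :=
    gen_mem_permGroup _ (0, y₀)
  have hgen_eq : (extYBE q T).σ (0, y₀) = twE q (fun _ => 1) 1 := by
    rw [extσ]
    congr 1
    · funext y
      rw [Subsingleton.elim (T.σ ((0 : ZMod q), y₀).2 y) ((0 : ZMod q), y₀).2]
      exact kdelta_self q _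
    · exact Subsingleton.elim _ _
  have hpow : ∀ t : ℕ, (twE q (fun _ => (1 : ZMod q)) (1 : Equiv.Perm Y)) ^ t
      = twE q (fun _ => (t : ZMod q)) 1 := by
    intro t
    rw [twE_pow]
    congr 1
    · funext y; simp
    · exact one_pow t
  have heq : twE q f g = twE q (fun _ => (((f y₀).val : ℕ) : ZMod q)) 1 := by
    congr 1
    · funext y
      rw [Subsingleton.elim y y₀, ZMod.natCast_val, ZMod.cast_id]
    · exact Subsingleton.elim g 1
  rw [heq, ← hpow, ← hgen_eq]
  exact Subgroup.pow_mem _ hgen _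


/-- The induction step of the structure theorem. -/
theorem fullStep (q q' : ℕ) [NeZero q] [NeZero q'] {Y' : Type} [Finite Y'] (T' : YBE Y')
    (hu : IsUnit ((q' : ℕ) : ZMod q))
    (hfull' : (extYBE q T').permGroup = ESub q T'.permGroup) :
    (extYBE q (extYBE q' T')).permGroup = ESub q (extYBE q' T').permGroup := by
  set T : YBE (ZMod q' × Y') := extYBE q' T' with hT
  set W : Subgroup (Equiv.Perm (ZMod q × (ZMod q' × Y'))) := (extYBE q T).permGroup with hW
  apply le_antisymm (permGroup_ext_le q T)
  rintro π ⟨f, g, hg, rfl⟩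
  -- Step A : fiberwise differences are in the translation part of W
  have hdiff : ∀ (a a' : ZMod q') (x : Y'),
      (fun v : ZMod q' × Y' => kdelta q (a, x) v - kdelta q (a', x) v) ∈ Ksub q W := by
    intro a a' x
    have h1 : (extYBE q T).σ (0, (a, x))
        = twE q (fun y => kdelta q ((a, x) : ZMod q' × Y') (T.σ (a, x) y)) (T.σ (a, x)) := rfl
    have h2 : (extYBE q T).σ (0, (a', x))
        = twE q (fun y => kdelta q ((a', x) : ZMod q' × Y') (T.σ (a, x) y)) (T.σ (a, x)) := rfl
    have hprod : (extYBE q T).σ (0, (a, x)) * ((extYBE q T).σ (0, (a', x)))⁻¹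
        = twE q (fun v => kdelta q ((a, x) : ZMod q' × Y') v
            - kdelta q ((a', x) : ZMod q' × Y') v) 1 := by
      rw [h1, h2, twE_inv, twE_mul, twE_eq_iff]
      constructor
      · funext v
        rw [perm_apply_inv_self, sub_eq_neg_add]
      · rw [mul_inv_cancel]
    rw [mem_Ksub, ← hprod]
    exact W.mul_mem (Subgroup.subset_closure ⟨(0, (a, x)), rfl⟩)
      (W.inv_mem (Subgroup.subset_closure ⟨(0, (a', x)), rfl⟩))
  -- Step B : lifting the lower-level group along the fiber-sum map
  have lift2 : ∀ π' ∈ (extYBE q T').permGroup,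
      ∃ (f : ZMod q' × Y' → ZMod q) (t : Y' → ZMod q') (g₂ : Equiv.Perm Y'),
        twE q f (twE q' t g₂) ∈ W ∧ π' = twE q (fibS q q' f) g₂ := by
    intro π' hπ'
    refine Subgroup.closure_induction ?_ ?_ ?_ ?_ hπ'
    · rintro π' ⟨u', rfl⟩
      obtain ⟨c, x⟩ := u'
      refine ⟨fun y => kdelta q (((0 : ZMod q'), x) : ZMod q' × Y') (T.σ (0, x) y),
        fun z => kdelta q' x (T'.σ x z), T'.σ x,
        Subgroup.subset_closure ⟨((0 : ZMod q), ((0 : ZMod q'), x)), rfl⟩, ?_⟩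
      have hfib : fibS q q'
          (fun y : ZMod q' × Y' => kdelta q (((0 : ZMod q'), x) : ZMod q' × Y') (T.σ (0, x) y))
          = fun z => kdelta q x (T'.σ x z) := by
        funext z
        show (∑ b : ZMod q', kdelta q (((0 : ZMod q'), x) : ZMod q' × Y')
          (b + kdelta q' x (T'.σ x z), T'.σ x z)) = kdelta q x (T'.σ x z)
        by_cases hxz : x = T'.σ x z
        · rw [Finset.sum_eq_single_of_mem (-(kdelta q' x (T'.σ x z))) (Finset.mem_univ _)]
          · rw [neg_add_cancel, ← hxz, kdelta_self, kdelta_self]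
          · intro b _ hbne
            apply kdelta_ne
            intro hcontra
            apply hbne
            have h0 : (0 : ZMod q') = b + kdelta q' x (T'.σ x z) := congrArg Prod.fst hcontra
            exact eq_neg_of_add_eq_zero_left h0.symm
        · rw [kdelta_ne q hxz, Finset.sum_eq_zero]
          intro b _
          apply kdelta_ne
          intro hcontra
          exact hxz (congrArg Prod.snd hcontra)
      rw [hfib]
      exact extσ q T' (c, x)
    · refine ⟨0, 0, 1, ?_, ?_⟩
      · have e1 : twE q' (0 : Y' → ZMod q') 1 = 1 := twE_one q'
        have e2 : twE q (0 : ZMod q' × Y' → ZMod q) 1 = 1 := twE_one q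
        rw [e1, e2]
        exact W.one_mem
      · have hf0 : fibS q q' (0 : ZMod q' × Y' → ZMod q) = 0 := by
          funext z
          show (∑ _b : ZMod q', (0 : ZMod q)) = 0
          simp
        rw [hf0]
        exact (twE_one q).symm
    · rintro π₁ π₂ _ _ ⟨f₁, t₁, g₁, hW₁, rfl⟩ ⟨f₂, t₂, g₂, hW₂, rfl⟩
      refine ⟨fun y => f₂ y + f₁ (twE q' t₂ g₂ y), fun z => t₂ z + t₁ (g₂ z), g₁ * g₂, ?_, ?_⟩
      · rw [← twE_mul q' t₁ t₂ g₁ g₂, ← twE_mul q f₁ f₂ (twE q' t₁ g₁) (twE q' t₂ g₂)]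
        exact W.mul_mem hW₁ hW₂
      · rw [twE_mul, twE_eq_iff]
        constructor
        · have hcomp := fibS_twE q q' f₁ t₂ g₂
          funext z
          symm
          show fibS q q' (fun y => f₂ y + f₁ (twE q' t₂ g₂ y)) z
            = fibS q q' f₂ z + fibS q q' f₁ (g₂ z)
          show (∑ b : ZMod q', (f₂ (b, z) + f₁ (twE q' t₂ g₂ (b, z)))) = _
          rw [Finset.sum_add_distrib]
          congr 1
          exact congrFun hcomp z
        · rfl
    · rintro π₁ _ ⟨f₁, t₁, g₁, hW₁, rfl⟩
      refine ⟨fun y => -f₁ ((twE q' t₁ g₁)⁻¹ y), fun z => -t₁ (g₁⁻¹ z), g₁⁻¹, ?_, ?_⟩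
      · rw [← twE_inv q' t₁ g₁, ← twE_inv q f₁ (twE q' t₁ g₁)]
        exact W.inv_mem hW₁
      · rw [twE_inv, twE_eq_iff]
        constructor
        · funext z
          symm
          show fibS q q' (fun y => -f₁ ((twE q' t₁ g₁)⁻¹ y)) z = -(fibS q q' f₁ (g₁⁻¹ z))
          rw [twE_inv]
          have hcomp := congrFun (fibS_twE q q' (fun v => -f₁ v) (fun z => -t₁ (g₁⁻¹ z)) g₁⁻¹) z
          rw [show (fun y => -f₁ (twE q' (fun z => -t₁ (g₁⁻¹ z)) g₁⁻¹ y))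
            = (fun y => (fun v => -f₁ v) (twE q' (fun z => -t₁ (g₁⁻¹ z)) g₁⁻¹ y)) from rfl]
          rw [hcomp]
          show (∑ b : ZMod q', -f₁ (b, g₁⁻¹ z)) = -∑ b : ZMod q', f₁ (b, g₁⁻¹ z)
          rw [Finset.sum_neg_distrib]
        · rfl
  -- Step B' : every fiber-sum value is attained within the translation part
  have fibmem : ∀ e : Y' → ZMod q, ∃ h ∈ Ksub q W, fibS q q' h = e := by
    intro e
    obtain ⟨r, hr⟩ := hu.exists_right_inv
    set e₀ : Y' → ZMod q := fun z => r * e z with he₀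
    have hmem0 : twE q e₀ (1 : Equiv.Perm Y') ∈ ESub q T'.permGroup :=
      ⟨e₀, 1, Subgroup.one_mem _, rfl⟩
    rw [← hfull'] at hmem0
    obtain ⟨f, t, g₂, hWt, heq⟩ := lift2 _ hmem0
    obtain ⟨hfeq, hgeq⟩ := (twE_eq_iff q).1 heq
    rw [← hgeq] at hWt
    set g : Equiv.Perm (ZMod q' × Y') := twE q' t 1 with hgdef
    have hgpow : g ^ q' = 1 := by
      rw [hgdef, twE_pow]
      have hzero : (fun z => ∑ _j ∈ Finset.range q', t (((1 : Equiv.Perm Y') ^ _j) z))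
          = (fun _ => (0 : ZMod q')) := by
        funext z
        simp [ZMod.natCast_self]
      rw [hzero, one_pow, twE_one]
    have hWpow : (twE q f g) ^ q' ∈ W := Subgroup.pow_mem W hWt q'
    rw [twE_pow, hgpow] at hWpow
    refine ⟨_, hWpow, ?_⟩
    funext z
    show (∑ b : ZMod q', ∑ j ∈ Finset.range q', f ((g ^ j) (b, z))) = e z
    rw [Finset.sum_comm]
    have hj : ∀ j : ℕ, (∑ b : ZMod q', f ((g ^ j) (b, z))) = fibS q q' f z := by
      intro j
      have hgj : g ^ j = twE q' (fun z' => ∑ _i ∈ Finset.range j, t z') 1 := by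
        rw [hgdef, twE_pow, one_pow]
        congr 1
        funext z'
        exact Finset.sum_congr rfl (fun i _ => by rw [one_pow, Equiv.Perm.one_apply])
      rw [hgj]
      simp only [twE_apply, Equiv.Perm.one_apply]
      exact Equiv.sum_comp (Equiv.addRight _) (fun b => f (b, z))
    rw [Finset.sum_congr rfl (fun j _ => hj j), Finset.sum_const, Finset.card_range,
      nsmul_eq_mul]
    rw [← hfeq, he₀]
    show ((q' : ℕ) : ZMod q) * (r * e z) = e z
    rw [← mul_assoc, hr, one_mul]
  -- Step C : zero-fiber-sum functions are in the translation part
  haveI : Fintype Y' := Fintype.ofFinite Y'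
  have zerofib : ∀ d : ZMod q' × Y' → ZMod q, fibS q q' d = 0 → d ∈ Ksub q W := by
    intro d hd
    have hdecomp : d = ∑ u : ZMod q' × Y', (d u).val
        • (fun v : ZMod q' × Y' => kdelta q u v - kdelta q ((0 : ZMod q'), u.2) v) := by
      funext v
      rw [Finset.sum_apply]
      simp only [Pi.smul_apply, smul_sub]
      rw [Finset.sum_sub_distrib]
      have h1 : (∑ u : ZMod q' × Y', (d u).val • kdelta q u v) = d v := by
        rw [Finset.sum_eq_single_of_mem v (Finset.mem_univ v)]
        · rw [kdelta_self, nsmul_eq_mul, mul_one, ZMod.natCast_val, ZMod.cast_id]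
        · intro u _ hne
          rw [kdelta_ne q hne, smul_zero]
      have h2 : (∑ u : ZMod q' × Y', (d u).val • kdelta q ((0 : ZMod q'), u.2) v) = 0 := by
        obtain ⟨b, z⟩ := v
        by_cases hb : b = 0
        · subst hb
          rw [Fintype.sum_prod_type]
          have hinner : ∀ a : ZMod q',
              (∑ x : Y', (d (a, x)).val • kdelta q (((0 : ZMod q'), x) : ZMod q' × Y')
                ((0 : ZMod q'), z)) = d (a, z) := by
            intro a
            rw [Finset.sum_eq_single_of_mem z (Finset.mem_univ z)]
            · rw [kdelta_self, nsmul_eq_mul, mul_one, ZMod.natCast_val, ZMod.cast_id]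
            · intro x _ hne
              rw [kdelta_ne q (fun hc => hne (congrArg Prod.snd hc)), smul_zero]
          rw [Finset.sum_congr rfl (fun a _ => hinner a)]
          have := congrFun hd z
          simpa [fibS] using this
        · rw [Finset.sum_eq_zero]
          intro u _
          rw [kdelta_ne q (fun hc => hb (congrArg Prod.fst hc).symm), smul_zero]
      rw [h1, h2, sub_zero]
    rw [hdecomp]
    apply AddSubgroup.sum_mem
    intro u _
    apply AddSubgroup.nsmul_mem
    have := hdiff u.1 0 u.2
    simpa using this
  -- Step C' : the translation part is everything
  have hK : ∀ h : ZMod q' × Y' → ZMod q, h ∈ Ksub q W := by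
    intro h
    obtain ⟨F, hF, hFe⟩ := fibmem (fibS q q' h)
    have hsub : (h - F) ∈ Ksub q W := by
      apply zerofib
      funext z
      show (∑ b : ZMod q', (h (b, z) - F (b, z))) = 0
      rw [Finset.sum_sub_distrib]
      have := congrFun hFe z
      show fibS q q' h z - fibS q q' F z = 0
      rw [this, sub_self]
    have := AddSubgroup.add_mem _ hsub hF
    simpa using this
  -- final assembly
  obtain ⟨f₁, hf₁⟩ := lift_mem q T g hg
  have hprod : twE q (fun y => f (g⁻¹ y) - f₁ (g⁻¹ y)) 1 * twE q f₁ g = twE q f g := by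
    rw [twE_mul, twE_eq_iff]
    constructor
    · funext y
      rw [perm_inv_apply_self]
      show f₁ y + (f y - f₁ y) = f y
      ring
    · rw [one_mul]
  rw [← hprod]
  exact W.mul_mem (hK _) hf₁

/-- The structure theorem for the permutation groups of the tower. -/
theorem full : ∀ l : List ℕ, (∀ a ∈ l, a.Prime) → ∀ q : ℕ, q.Prime → q ∉ l →
    (SoT (q :: l)).permGroup = ESub q (SoT l).permGroup
  | [], _, q, hq, _ => by
      haveI : NeZero q := ⟨hq.ne_zero⟩
      haveI : Subsingleton (XT []) := inferInstanceAs (Subsingleton PUnit.{1})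
      exact fullNil q (SoT [])
  | q' :: l', hp, q, hq, hql => by
      have hq' : q'.Prime := hp q' (List.mem_cons_self (a := q') (l := l'))
      have hl' := fun a ha => hp a (List.mem_cons_of_mem q' ha)
      haveI : NeZero q := ⟨hq.ne_zero⟩
      haveI : NeZero q' := ⟨hq'.ne_zero⟩
      haveI : Finite (XT l') := finiteXT l' (fun a ha => (hl' a ha).ne_zero)
      have hqq' : q ≠ q' := fun h => hql (h ▸ List.mem_cons_self (a := q') (l := l'))
      have hql' : q ∉ l' := fun h => hql (List.mem_cons_of_mem q' h)
      have hu : IsUnit ((q' : ℕ) : ZMod q) := by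
        haveI : Fact q.Prime := ⟨hq⟩
        rw [isUnit_iff_ne_zero]
        intro h0
        rw [ZMod.natCast_eq_zero_iff] at h0
        exact hqq' ((Nat.prime_dvd_prime_iff_eq hq hq').1 h0)
      have hfull' : (extYBE q (SoT l')).permGroup = ESub q (SoT l').permGroup :=
        full l' hl' q hq hql'
      exact fullStep q q' (SoT l') hu hfull'

lemma card_ESub (q : ℕ) [NeZero q] {Y : Type} [Finite Y] (G : Subgroup (Equiv.Perm Y)) :
    Nat.card (ESub q G) = q ^ Nat.card Y * Nat.card G := by
  classical
  have hinj : Function.Injective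
      (fun fg : (Y → ZMod q) × G => twE q fg.1 (fg.2 : Equiv.Perm Y)) := by
    rintro ⟨f, g⟩ ⟨f', g'⟩ h
    obtain ⟨h1, h2⟩ := (twE_eq_iff q).1 h
    exact Prod.ext h1 (Subtype.ext h2)
  have hrange : ((ESub q G : Set (Equiv.Perm (ZMod q × Y))))
      = Set.range (fun fg : (Y → ZMod q) × G => twE q fg.1 (fg.2 : Equiv.Perm Y)) := by
    ext π
    constructor
    · rintro ⟨f, g, hg, rfl⟩
      exact ⟨(f, ⟨g, hg⟩), rfl⟩
    · rintro ⟨⟨f, g⟩, rfl⟩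
      exact ⟨f, g, g.2, rfl⟩
  have : Nat.card (ESub q G) = Nat.card ((ESub q G : Set (Equiv.Perm (ZMod q × Y)))) := rfl
  rw [this, hrange, Nat.card_range_of_injective hinj, Nat.card_prod, Nat.card_fun,
    Nat.card_zmod]

/-- The cardinality of the permutation group of the tower. -/
def gcf : List ℕ → ℕ
  | [] => 1
  | q :: l => q ^ l.prod * gcf l

theorem gcount : ∀ l : List ℕ, (∀ a ∈ l, a.Prime) → l.Nodup →
    Nat.card (SoT l).permGroup = gcf l
  | [], _, _ => by
      haveI : Subsingleton (XT []) := inferInstanceAs (Subsingleton PUnit.{1})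
      haveI : Subsingleton (Equiv.Perm (XT [])) :=
        ⟨fun a b => Equiv.ext fun y => Subsingleton.elim _ _⟩
      haveI : Subsingleton ((SoT []).permGroup) :=
        ⟨fun a b => Subtype.ext (Subsingleton.elim _ _)⟩
      exact Nat.card_eq_one_iff_unique.2 ⟨inferInstance, ⟨1⟩⟩
  | q :: l, hp, hnd => by
      have hq : q.Prime := hp q (List.mem_cons_self (a := q) (l := l))
      have hl := fun a ha => hp a (List.mem_cons_of_mem q ha)
      haveI : NeZero q := ⟨hq.ne_zero⟩
      haveI : Finite (XT l) := finiteXT l (fun a ha => (hl a ha).ne_zero)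
      have hnotmem : q ∉ l := (List.nodup_cons.1 hnd).1
      rw [full l hl q hq hnotmem]
      show Nat.card (ESub q (SoT l).permGroup) = gcf (q :: l)
      rw [card_ESub q ((SoT l).permGroup),
        gcount l hl (List.nodup_cons.1 hnd).2, cardXT l (fun a ha => (hl a ha).ne_zero)]
      rfl


/-! ### Multipermutation level -/

lemma isRetract_ext (q : ℕ) [NeZero q] (h1 : (1 : ZMod q) ≠ 0) {Y : Type} (T : YBE Y) :
    (extYBE q T).IsRetract T := by
  refine ⟨Prod.snd, fun y => ⟨(0, y), rfl⟩, fun u v => rfl, ?_⟩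
  intro u u'
  constructor
  · intro h2
    have : (extYBE q T).σ u = (extYBE q T).σ (u.1, u'.2) := by rw [← h2]
    rw [this]
    rfl
  · intro hσ
    by_contra hne
    have happ := congrArg (fun π : Equiv.Perm (ZMod q × Y) => π (0, (T.σ u.2)⁻¹ u.2)) hσ
    simp only [extσ, twE_apply] at happ
    rw [perm_apply_inv_self] at happ
    have hfst := congrArg Prod.fst happ
    have hsnd := congrArg Prod.snd happ
    simp only at hfst hsnd
    rw [kdelta_self] at hfst
    have hz : kdelta q u'.2 ((T.σ u'.2) ((T.σ u.2)⁻¹ u.2)) = 0 :=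
      kdelta_ne q (fun hc => hne (by rw [hsnd]; exact hc.symm))
    rw [hz] at hfst
    exact h1 (by simpa using hfst)

lemma isHom_comp_equiv {X Z Z' : Type} {S : YBE X} {T : YBE Z} {T' : YBE Z'}
    (e : Z ≃ Z') (hhom : YBE.IsHom T T' e) : True := trivial

/-- two retracts of the same solution are isomorphic -/
lemma retract_unique {X Z Z' : Type} {S : YBE X} {T : YBE Z} {T' : YBE Z'}
    (h : S.IsRetract T) (h' : S.IsRetract T') :
    ∃ e : Z ≃ Z', YBE.IsHom T T' e := by
  obtain ⟨f, fs, fh, fiff⟩ := h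
  obtain ⟨f', fs', fh', fiff'⟩ := h'
  have key : ∀ x y : X, f x = f y → f' x = f' y := fun x y hxy =>
    (fiff' x y).2 ((fiff x y).1 hxy)
  have key' : ∀ x y : X, f' x = f' y → f x = f y := fun x y hxy =>
    (fiff x y).2 ((fiff' x y).1 hxy)
  classical
  set φ : Z → Z' := fun z => f' (fs z).choose with hφdef
  set ψ : Z' → Z := fun z => f (fs' z).choose with hψdef
  have hφ : ∀ x : X, φ (f x) = f' x := fun x => key _ x (fs (f x)).choose_spec
  have hψ : ∀ x : X, ψ (f' x) = f x := fun x => key' _ x (fs' (f' x)).choose_spec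
  have hleft : ∀ z : Z, ψ (φ z) = z := by
    intro z
    obtain ⟨x, rfl⟩ := fs z
    rw [hφ, hψ]
  have hright : ∀ z : Z', φ (ψ z) = z := by
    intro z
    obtain ⟨x, rfl⟩ := fs' z
    rw [hψ, hφ]
  refine ⟨⟨φ, ψ, hleft, hright⟩, ?_⟩
  intro z w
  obtain ⟨x, rfl⟩ := fs z
  obtain ⟨y, rfl⟩ := fs w
  show φ (T.σ (f x) (f y)) = T'.σ (φ (f x)) (φ (f y))
  rw [← fh, hφ, hφ, hφ, fh']

/-- `YBE.MPLevelLE` transfers along isomorphisms of solutions -/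
lemma mple_congr : ∀ (k : ℕ) {Z Z' : Type} {T : YBE Z} {T' : YBE Z'}
    (e : Z ≃ Z'), YBE.IsHom T T' e → YBE.MPLevelLE k Z T → YBE.MPLevelLE k Z' T'
  | 0, Z, Z', T, T', e, _, ⟨hne, hss⟩ =>
      ⟨⟨e hne.some⟩, ⟨fun a b => by
        have := hss.allEq (e.symm a) (e.symm b)
        simpa using congrArg e this⟩⟩
  | k + 1, Z, Z', T, T', e, hhom, ⟨Z₂, T₂, ⟨g, gs, gh, giff⟩, hk⟩ => by
      have hinvhom : ∀ z w : Z', T.σ (e.symm z) (e.symm w) = e.symm (T'.σ z w) := by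
        intro z w
        apply e.injective
        rw [Equiv.apply_symm_apply, hhom (e.symm z) (e.symm w), Equiv.apply_symm_apply,
          Equiv.apply_symm_apply]
      have hσtrans : ∀ a b : Z, T.σ a = T.σ b ↔ T'.σ (e a) = T'.σ (e b) := by
        intro a b
        constructor
        · intro hab
          ext c
          have h1 := hhom a (e.symm c)
          have h2 := hhom b (e.symm c)
          rw [Equiv.apply_symm_apply] at h1 h2
          rw [← h1, ← h2, hab]
        · intro hab
          ext c
          have h1 := hhom a c
          have h2 := hhom b c
          apply e.injective
          rw [h1, h2, hab]
      refine ⟨Z₂, T₂, ⟨g ∘ e.symm, gs.comp e.symm.surjective, ?_, ?_⟩, hk⟩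
      · intro z w
        show g (e.symm (T'.σ z w)) = T₂.σ (g (e.symm z)) (g (e.symm w))
        rw [← hinvhom, gh]
      · intro z w
        show g (e.symm z) = g (e.symm w) ↔ _
        rw [giff (e.symm z) (e.symm w), hσtrans (e.symm z) (e.symm w),
          Equiv.apply_symm_apply, Equiv.apply_symm_apply]

/-- upper bound for the multipermutation level of the tower -/
lemma mpleSoT : ∀ l : List ℕ, (∀ a ∈ l, a.Prime) → YBE.MPLevelLE l.length (XT l) (SoT l)
  | [], _ => ⟨⟨PUnit.unit⟩, inferInstanceAs (Subsingleton PUnit.{1})⟩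
  | q :: l, hp => by
      have hq : q.Prime := hp q (List.mem_cons_self (a := q) (l := l))
      haveI : NeZero q := ⟨hq.ne_zero⟩
      haveI : Fact q.Prime := ⟨hq⟩
      have h1 : (1 : ZMod q) ≠ 0 := one_ne_zero
      exact ⟨XT l, SoT l, isRetract_ext q h1 (SoT l),
        mpleSoT l (fun a ha => hp a (List.mem_cons_of_mem q ha))⟩

/-- lower bound for the multipermutation level of the tower -/
lemma mpnotSoT : ∀ l : List ℕ, (∀ a ∈ l, a.Prime) →
    ∀ k : ℕ, k < l.length → ¬ YBE.MPLevelLE k (XT l) (SoT l)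
  | [], _, k, hk => absurd hk (by simp)
  | q :: l, hp, k, hk => by
      have hq : q.Prime := hp q (List.mem_cons_self (a := q) (l := l))
      haveI : NeZero q := ⟨hq.ne_zero⟩
      haveI : Fact q.Prime := ⟨hq⟩
      have hl := fun a ha => hp a (List.mem_cons_of_mem q ha)
      match k with
      | 0 =>
          rintro ⟨_, hss⟩
          have hcontra : ((0 : ZMod q), Classical.arbitrary (XT l))
              = ((1 : ZMod q), Classical.arbitrary (XT l)) := hss.allEq _ _
          have h00 := congrArg Prod.fst hcontra
          have h01 : (0 : ZMod q) = 1 := by simpa using h00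
          exact one_ne_zero h01.symm
      | k' + 1 =>
          rintro ⟨Z, T₂, hret, hk'⟩
          have hret2 : (SoT (q :: l)).IsRetract (SoT l) :=
            isRetract_ext q one_ne_zero (SoT l)
          obtain ⟨e, ehom⟩ := retract_unique hret hret2
          have := mple_congr k' e ehom hk'
          exact mpnotSoT l hl k' (by simpa using Nat.lt_of_succ_lt_succ hk) this


/-! ### Arithmetic of the group order -/

lemma gcf_formula : ∀ (n : ℕ) (p : Fin n → ℕ),
    gcf ((List.ofFn p).reverse)
      = Finset.univ.prod (fun i : Fin n =>
          p i ^ (Finset.prod (Finset.filter (fun j => j < i) Finset.univ) p))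
  | 0, p => by simp [gcf]
  | n + 1, p => by
      have hfa : ∀ c : Fin (n + 1),
          Finset.prod (Finset.filter (fun j => j < c) Finset.univ) p
            = ∏ j : Fin (n + 1), if j < c then p j else 1 := by
        intro c
        rw [Finset.prod_filter]
      have hlast : Finset.prod (Finset.filter (fun j => j < Fin.last n) Finset.univ) p
          = ∏ i : Fin n, p i.castSucc := by
        rw [hfa, Fin.prod_univ_castSucc (fun j : Fin (n + 1) =>
          if j < Fin.last n then p j else 1)]
        rw [if_neg (lt_irrefl _), mul_one]
        exact Finset.prod_congr rfl (fun j _ => if_pos (Fin.castSucc_lt_last j))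
      have hmid : ∀ i : Fin n,
          Finset.prod (Finset.filter (fun j => j < i.castSucc) Finset.univ) p
            = Finset.prod (Finset.filter (fun j => j < i) Finset.univ)
                (fun j : Fin n => p j.castSucc) := by
        intro i
        rw [hfa, Fin.prod_univ_castSucc (fun j : Fin (n + 1) =>
          if j < i.castSucc then p j else 1)]
        rw [if_neg (not_lt.2 (le_of_lt (Fin.castSucc_lt_last i))), mul_one,
          Finset.prod_filter]
        exact Finset.prod_congr rfl (fun j _ => by
          simp only [Fin.castSucc_lt_castSucc_iff])
      have hfinal : (∏ i : Fin n, p i.castSucc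
            ^ (Finset.prod (Finset.filter (fun j => j < i.castSucc) Finset.univ) p))
          = ∏ i : Fin n, p i.castSucc
            ^ (Finset.prod (Finset.filter (fun j => j < i) Finset.univ)
                (fun j : Fin n => p j.castSucc)) :=
        Finset.prod_congr rfl (fun i _ => by rw [hmid i])
      rw [List.ofFn_succ', List.concat_eq_append, List.reverse_append]
      show p (Fin.last n) ^ ((List.ofFn fun i : Fin n => p i.castSucc).reverse).prod
          * gcf ((List.ofFn fun i : Fin n => p i.castSucc).reverse) = _
      rw [List.prod_reverse, List.prod_ofFn, gcf_formula n (fun i => p i.castSucc),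
        Fin.prod_univ_castSucc (fun i : Fin (n + 1) =>
          p i ^ (Finset.prod (Finset.filter (fun j => j < i) Finset.univ) p)),
        hlast, hfinal]
      exact mul_comm _ _


end S14

/-- For every positive `n` and distinct primes `p 0, …, p (n-1)` there is an
indecomposable solution of cardinality `p 0 ⋯ p (n-1)` of multipermutation level exactly `n`
with `|𝒢(X,r)| = p₁ · p₂^{p₁} · p₃^{p₁p₂} ⋯ pₙ^{p₁⋯p_{n-1}}`. -/
theorem statement14 {n : ℕ} (hn : 0 < n) (p : Fin n → ℕ)
    (hp : ∀ i, Nat.Prime (p i)) (hinj : Function.Injective p) :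
    ∃ (X : Type) (S : YBE X),
      Nat.card X = Finset.univ.prod p ∧
      S.Indecomposable ∧
      S.MPLevelExact n ∧
      Nat.card ↥S.permGroup =
        Finset.univ.prod (fun i : Fin n =>
          p i ^ (Finset.prod (Finset.filter (fun j => j < i) Finset.univ) p)) := by
  classical
  set L := (List.ofFn p).reverse with hL
  have hLp : ∀ a ∈ L, a.Prime := by
    intro a ha
    rw [hL, List.mem_reverse, List.mem_ofFn] at ha
    obtain ⟨i, rfl⟩ := ha
    exact hp i
  have hLnd : L.Nodup := by
    rw [hL, List.nodup_reverse, List.nodup_ofFn]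
    exact hinj
  have hLlen : L.length = n := by
    rw [hL, List.length_reverse, List.length_ofFn]
  have hne0 : ∀ a ∈ L, a ≠ 0 := fun a ha => (hLp a ha).ne_zero
  refine ⟨S14.XT L, S14.SoT L, ?_, ?_, ?_, ?_⟩
  · rw [S14.cardXT L hne0, hL, List.prod_reverse, List.prod_ofFn]
  · intro v w
    obtain ⟨k, hk⟩ := S14.transSoT L hLp v v w
    exact ⟨(S14.SoT L).σ v ^ k,
      Subgroup.pow_mem _ (S14.gen_mem_permGroup _ v) k, hk⟩
  · refine ⟨hn, ?_, ?_⟩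
    · have := S14.mpleSoT L hLp
      rwa [hLlen] at this
    · intro k hkpos hkle
      by_contra hcon
      push_neg at hcon
      exact S14.mpnotSoT L hLp k (by rw [hLlen]; exact hcon) hkle
  · rw [S14.gcount L hLp hLnd, hL, S14.gcf_formula n p]
end
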